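/- arXiv:2305.08484 — 12 statements merged into one kernel-verified Lean document; each statement's English description precedes it below -/
import Mathlib

section
/- The quasiuniform infimum admits the following equivalent representations: Λ†_U(φ1,φ2) = inf_{V∈EI(U)} sup_{η>0} inf{ φ1(x1)+φ2(x2) : x1 ∈ V, x2 ∈ X, d(x1,x2) < η } = inf_{V∈EIᶜˡ(U)} sup_{η>0} inf{ φ1(x1)+φ2(x2) : x1, x2 ∈ V, d(x1,x2) < η } = inf_{V∈EIᶜˡ(U)} sup_{η>0} inf{ φ1(x1)+φ2(x2) : x1 ∈ V, x2 ∈ X, d(x1,x2) < η }, where EIᶜˡ(U) denotes the collection of closed essentially interior subsets of U. -/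
open Metric Set Filter

noncomputable section

/-- `V` is an essentially interior subset of `U`. -/
def EssInt {X : Type*} [MetricSpace X] (U V : Set X) : Prop :=
  ∃ ρ > (0 : ℝ), ∀ v ∈ V, Metric.ball v ρ ⊆ U

/-- The uniform infimum `Λ°_W(φ1,φ2)` of the decoupled sum over `W`. -/
def lambdaCirc {X : Type*} [MetricSpace X] (φ1 φ2 : X → EReal) (W : Set X) : EReal :=
  ⨆ η : {η : ℝ // 0 < η},
    sInf {v : EReal | ∃ x1 ∈ W, ∃ x2 ∈ W, dist x1 x2 < η.1 ∧ v = φ1 x1 + φ2 x2}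

/-- The quasiuniform infimum `Λ†_U(φ1,φ2)`. -/
def lambdaDag {X : Type*} [MetricSpace X] (φ1 φ2 : X → EReal) (U : Set X) : EReal :=
  ⨅ V : {V : Set X // EssInt U V}, lambdaCirc φ1 φ2 V.1

/-- `inf_U (φ1 + φ2)`. -/
def infSum {X : Type*} [MetricSpace X] (φ1 φ2 : X → EReal) (U : Set X) : EReal :=
  sInf {v : EReal | ∃ x ∈ U, v = φ1 x + φ2 x}

/-- `(φ1 ♦ φ2)_W (x1, x2)`. -/
def diamond {X : Type*} [MetricSpace X] (φ1 φ2 : X → EReal) (W : Set X) (x1 x2 : X) : EReal :=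
  sInf {v : EReal | ∃ x ∈ W,
    v = max (max ((dist x x1 : ℝ) : EReal) ((dist x x2 : ℝ) : EReal))
        (φ1 x + φ2 x - φ1 x1 - φ2 x2)}

/-- `Θ°_U(φ1,φ2)` (with the convention `sup ∅ = 0`). -/
def thetaCirc {X : Type*} [MetricSpace X] (φ1 φ2 : X → EReal) (U : Set X) : EReal :=
  ⨅ η : {η : ℝ // 0 < η},
    sSup (insert (0 : EReal)
      {v : EReal | ∃ x1 x2 : X, φ1 x1 < ⊤ ∧ x1 ∈ U ∧ φ2 x2 < ⊤ ∧ x2 ∈ U ∧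
        dist x1 x2 < η.1 ∧ v = diamond φ1 φ2 U x1 x2})

/-- `Θ†_{U,W}(φ1,φ2)`: as `Θ†_U`, but with the `♦`-expression taken over `W`. -/
def thetaDagW {X : Type*} [MetricSpace X] (φ1 φ2 : X → EReal) (U W : Set X) : EReal :=
  ⨆ V : {V : Set X // EssInt U V}, ⨅ η : {η : ℝ // 0 < η},
    sSup (insert (0 : EReal)
      {v : EReal | ∃ x1 x2 : X, φ1 x1 < ⊤ ∧ x1 ∈ V.1 ∧ φ2 x2 < ⊤ ∧ x2 ∈ V.1 ∧
        dist x1 x2 < η.1 ∧ v = diamond φ1 φ2 W x1 x2})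

/-- `Θ†_U(φ1,φ2)` (with the convention `sup ∅ = 0`). -/
def thetaDag {X : Type*} [MetricSpace X] (φ1 φ2 : X → EReal) (U : Set X) : EReal :=
  thetaDagW φ1 φ2 U U

/-- Indicator function of a set, in the `ℝ ∪ {+∞}` sense. -/
def indFn {X : Type*} (Ω : Set X) : X → EReal := fun x =>
  haveI := Classical.propDecidable (x ∈ Ω)
  if x ∈ Ω then 0 else ⊤

/-- `Λ_U(φ1,φ2)`: the uniform infimum of `(φ1,φ2)` around `U`. -/
def lambdaFull {X : Type*} [MetricSpace X] (φ1 φ2 : X → EReal) (U : Set X) : EReal :=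
  ⨆ η : {η : ℝ // 0 < η}, ⨆ ε : {ε : ℝ // 0 < ε},
    sInf {v : EReal | ∃ x1 x2 : X,
      dist x1 x2 < η.1 ∧ Metric.infDist x1 U < ε.1 ∧ v = φ1 x1 + φ2 x2}

section Aux

variable {X : Type*} [MetricSpace X] (φ1 φ2 : X → EReal)

/-- Decoupled version of `lambdaCirc`. -/
def Bval (V : Set X) : EReal :=
  ⨆ η : {η : ℝ // 0 < η},
    sInf {v : EReal | ∃ x1 ∈ V, ∃ x2 : X, dist x1 x2 < η.1 ∧ v = φ1 x1 + φ2 x2}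

lemma Bval_le_circ (V : Set X) : Bval φ1 φ2 V ≤ lambdaCirc φ1 φ2 V := by
  refine iSup_mono fun η => sInf_le_sInf ?_
  rintro v ⟨x1, h1, x2, _, hd, rfl⟩
  exact ⟨x1, h1, x2, hd, rfl⟩

lemma exists_closed_essInt (U V : Set X) (hV : EssInt U V) :
    ∃ W, EssInt U W ∧ IsClosed W ∧ lambdaCirc φ1 φ2 W ≤ Bval φ1 φ2 V := by
  obtain ⟨ρ, hρ, hsub⟩ := hV
  set W : Set X := closure (⋃ v ∈ V, Metric.ball v (ρ/4)) with hW
  have hWU : EssInt U W := by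
    refine ⟨ρ/2, by linarith, fun w hw => ?_⟩
    obtain ⟨z, hz, hdz⟩ := Metric.mem_closure_iff.1 hw (ρ/4) (by linarith)
    simp only [Set.mem_iUnion, Metric.mem_ball] at hz
    obtain ⟨v, hv, hzv⟩ := hz
    intro y hy
    apply hsub v hv
    have hy' : dist y w < ρ/2 := Metric.mem_ball.1 hy
    have : dist y v ≤ dist y w + dist w z + dist z v := dist_triangle4 y w z v
    exact Metric.mem_ball.2 (by linarith)
  refine ⟨W, hWU, isClosed_closure, ?_⟩
  refine iSup_le fun η => ?_
  have hη' : (0:ℝ) < min η.1 (ρ/4) := lt_min η.2 (by linarith)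
  have hstep : sInf {v : EReal | ∃ x1 ∈ V, ∃ x2 : X, dist x1 x2 < min η.1 (ρ/4) ∧
      v = φ1 x1 + φ2 x2} ≤ Bval φ1 φ2 V :=
    le_iSup (fun η' : {η : ℝ // 0 < η} => sInf {v : EReal | ∃ x1 ∈ V, ∃ x2 : X,
      dist x1 x2 < η'.1 ∧ v = φ1 x1 + φ2 x2}) ⟨min η.1 (ρ/4), hη'⟩
  refine le_trans (sInf_le_sInf ?_) hstep
  rintro v ⟨x1, h1, x2, hd, rfl⟩
  have hx1W : x1 ∈ W := subset_closure (Set.mem_iUnion₂.2 ⟨x1, h1, Metric.mem_ball_self (by linarith)⟩)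
  have hx2W : x2 ∈ W := subset_closure (Set.mem_iUnion₂.2 ⟨x1, h1, by
    simp only [Metric.mem_ball, dist_comm]
    exact lt_of_lt_of_le hd (min_le_right _ _)⟩)
  exact ⟨x1, hx1W, x2, hx2W, lt_of_lt_of_le hd (min_le_left _ _), rfl⟩

end Aux

/-- Equivalent representations of the quasiuniform infimum `Λ†_U(φ1,φ2)`. -/
theorem stmt3 {X : Type*} [MetricSpace X] (φ1 φ2 : X → EReal)
    (hbot1 : ∀ x, φ1 x ≠ ⊥) (hbot2 : ∀ x, φ2 x ≠ ⊥) (U : Set X)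
    (hne : ∃ x ∈ U, φ1 x < ⊤ ∧ φ2 x < ⊤) :
    (lambdaDag φ1 φ2 U =
      ⨅ V : {V : Set X // EssInt U V}, ⨆ η : {η : ℝ // 0 < η},
        sInf {v : EReal | ∃ x1 ∈ V.1, ∃ x2 : X,
          dist x1 x2 < η.1 ∧ v = φ1 x1 + φ2 x2}) ∧
    (lambdaDag φ1 φ2 U =
      ⨅ V : {V : Set X // EssInt U V ∧ IsClosed V}, lambdaCirc φ1 φ2 V.1) ∧
    (lambdaDag φ1 φ2 U =
      ⨅ V : {V : Set X // EssInt U V ∧ IsClosed V}, ⨆ η : {η : ℝ // 0 < η},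
        sInf {v : EReal | ∃ x1 ∈ V.1, ∃ x2 : X,
          dist x1 x2 < η.1 ∧ v = φ1 x1 + φ2 x2}) := by
  have hBL : (⨅ V : {V : Set X // EssInt U V}, Bval φ1 φ2 V.1) ≤ lambdaDag φ1 φ2 U :=
    iInf_mono fun V => Bval_le_circ φ1 φ2 V.1
  have hLc : lambdaDag φ1 φ2 U ≤
      ⨅ V : {V : Set X // EssInt U V ∧ IsClosed V}, lambdaCirc φ1 φ2 V.1 :=
    le_iInf fun V => iInf_le (fun V : {V : Set X // EssInt U V} => lambdaCirc φ1 φ2 V.1)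
      ⟨V.1, V.2.1⟩
  have hcB : (⨅ V : {V : Set X // EssInt U V ∧ IsClosed V}, lambdaCirc φ1 φ2 V.1) ≤
      ⨅ V : {V : Set X // EssInt U V}, Bval φ1 φ2 V.1 := by
    refine le_iInf fun V => ?_
    obtain ⟨W, hW, hWc, hle⟩ := exists_closed_essInt φ1 φ2 U V.1 V.2
    exact le_trans (iInf_le _ ⟨W, hW, hWc⟩) hle
  have h1 : lambdaDag φ1 φ2 U = ⨅ V : {V : Set X // EssInt U V}, Bval φ1 φ2 V.1 :=
    le_antisymm (le_trans hLc hcB) hBL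
  have h2 : lambdaDag φ1 φ2 U =
      ⨅ V : {V : Set X // EssInt U V ∧ IsClosed V}, lambdaCirc φ1 φ2 V.1 :=
    le_antisymm hLc (le_trans hcB hBL)
  have h3 : lambdaDag φ1 φ2 U =
      ⨅ V : {V : Set X // EssInt U V ∧ IsClosed V}, Bval φ1 φ2 V.1 := by
    refine le_antisymm ?_ ?_
    · refine le_iInf fun V => ?_
      obtain ⟨W, hW, hWc, hle⟩ := exists_closed_essInt φ1 φ2 U V.1 V.2.1
      exact le_trans (h2.le.trans (iInf_le (fun V : {V : Set X // EssInt U V ∧ IsClosed V} =>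
        lambdaCirc φ1 φ2 V.1) ⟨W, hW, hWc⟩)) hle
    · exact le_trans (iInf_mono fun V => Bval_le_circ φ1 φ2 V.1) h2.ge
  exact ⟨h1, h2, h3⟩
end
end

section
/- Let X be a normed space, x̄ ∈ X and δ > 0. Then Λ†_{B_δ(x̄)}(φ1,φ2) = Λ†_{B̄_δ(x̄)}(φ1,φ2) = inf_{ρ∈(0,δ)} sup_{η>0} inf{ φ1(x1)+φ2(x2) : x1, x2 ∈ B_ρ(x̄), d(x1,x2) < η } = inf_{ρ∈(0,δ)} sup_{η>0} inf{ φ1(x1)+φ2(x2) : x1 ∈ B_ρ(x̄), x2 ∈ X, d(x1,x2) < η }, and the same value is obtained when the open balls B_ρ(x̄) in the last two expressions are replaced by the closed balls B̄_ρ(x̄). -/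
open Metric Set Filter

noncomputable section

/-- Half-free variant of `lambdaCirc`. -/
def lamH {X : Type*} [MetricSpace X] (φ1 φ2 : X → EReal) (W : Set X) : EReal :=
  ⨆ η : {η : ℝ // 0 < η},
    sInf {v : EReal | ∃ x1 ∈ W, ∃ x2 : X, dist x1 x2 < η.1 ∧ v = φ1 x1 + φ2 x2}

lemma lambdaCirc_anti {X : Type*} [MetricSpace X] (φ1 φ2 : X → EReal) {W W' : Set X}
    (h : W ⊆ W') : lambdaCirc φ1 φ2 W' ≤ lambdaCirc φ1 φ2 W := by
  refine iSup_mono fun η => sInf_le_sInf ?_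
  rintro v ⟨x1, h1, x2, h2, hd, rfl⟩
  exact ⟨x1, h h1, x2, h h2, hd, rfl⟩

lemma lamH_le_lambdaCirc {X : Type*} [MetricSpace X] (φ1 φ2 : X → EReal) (W : Set X) :
    lamH φ1 φ2 W ≤ lambdaCirc φ1 φ2 W := by
  refine iSup_mono fun η => sInf_le_sInf ?_
  rintro v ⟨x1, h1, x2, h2, hd, rfl⟩
  exact ⟨x1, h1, x2, hd, rfl⟩

lemma lambdaCirc_le_lamH {X : Type*} [MetricSpace X] (φ1 φ2 : X → EReal)
    {W W' : Set X} {r : ℝ} (hr : 0 < r) (hWW' : W ⊆ W')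
    (h : ∀ x ∈ W, Metric.ball x r ⊆ W') :
    lambdaCirc φ1 φ2 W' ≤ lamH φ1 φ2 W := by
  refine iSup_le fun η => le_iSup_of_le ⟨min η.1 r, lt_min η.2 hr⟩ (sInf_le_sInf ?_)
  rintro v ⟨x1, hx1, x2, hd, rfl⟩
  exact ⟨x1, hWW' hx1, x2,
    h x1 hx1 (Metric.mem_ball'.mpr (hd.trans_le (min_le_right _ _))),
    hd.trans_le (min_le_left _ _), rfl⟩

/-- Key geometric lemma: if every `r`-ball around points of `V` lands in the closed
`δ`-ball, then `V` lies in the closed `(δ - min r δ)`-ball. -/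
lemma essint_sub {X : Type*} [NormedAddCommGroup X] [NormedSpace ℝ X]
    (x₀ : X) {δ r : ℝ} (hδ : 0 < δ) (hr : 0 < r) {V : Set X}
    (h : ∀ v ∈ V, Metric.ball v r ⊆ Metric.closedBall x₀ δ) :
    ∀ v ∈ V, dist v x₀ ≤ δ - min r δ := by
  intro v hv
  have hvδ : dist v x₀ ≤ δ := h v hv (Metric.mem_ball_self hr)
  by_contra hc
  push_neg at hc
  set d := dist v x₀ with hd
  have hmin : min r δ ≤ δ := min_le_right r δ
  have hminr : min r δ ≤ r := min_le_left r δ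
  have hm0 : 0 < min r δ := lt_min hr hδ
  have hd0 : 0 < d := lt_of_le_of_lt (by linarith) hc
  set t := (δ - d + min r δ) / 2 with ht
  have ht0 : 0 < t := by simp only [ht]; linarith
  have htr : t < r := by simp only [ht]; linarith
  have htd : δ - d < t := by simp only [ht]; linarith
  have hnorm : ‖v - x₀‖ = d := (dist_eq_norm v x₀).symm
  set w := v + (t / d) • (v - x₀) with hw
  have hwv : dist w v = t := by
    rw [dist_eq_norm]
    have hwv' : w - v = (t / d) • (v - x₀) := by rw [hw]; abel
    rw [hwv', norm_smul, hnorm, Real.norm_eq_abs, abs_of_nonneg (by positivity)]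
    field_simp
  have hwx : dist w x₀ = d + t := by
    rw [dist_eq_norm]
    have hwx' : w - x₀ = (1 + t / d) • (v - x₀) := by
      rw [hw, add_smul, one_smul]; abel
    rw [hwx', norm_smul, hnorm, Real.norm_eq_abs,
      abs_of_nonneg (by positivity)]
    field_simp
  have hwball : w ∈ Metric.ball v r := by rw [Metric.mem_ball, hwv]; exact htr
  have := h v hv hwball
  rw [Metric.mem_closedBall, hwx] at this
  linarith

/-- Representations of `Λ†` over open and closed balls in a normed space. -/
theorem stmt4 {X : Type*} [NormedAddCommGroup X] [NormedSpace ℝ X]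
    (φ1 φ2 : X → EReal) (hbot1 : ∀ x, φ1 x ≠ ⊥) (hbot2 : ∀ x, φ2 x ≠ ⊥)
    (x₀ : X) (δ : ℝ) (hδ : 0 < δ)
    (hne : ∃ x ∈ Metric.ball x₀ δ, φ1 x < ⊤ ∧ φ2 x < ⊤) :
    (lambdaDag φ1 φ2 (Metric.ball x₀ δ) = lambdaDag φ1 φ2 (Metric.closedBall x₀ δ)) ∧
    (lambdaDag φ1 φ2 (Metric.ball x₀ δ) =
      ⨅ ρ : {ρ : ℝ // 0 < ρ ∧ ρ < δ}, lambdaCirc φ1 φ2 (Metric.ball x₀ ρ.1)) ∧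
    (lambdaDag φ1 φ2 (Metric.ball x₀ δ) =
      ⨅ ρ : {ρ : ℝ // 0 < ρ ∧ ρ < δ}, ⨆ η : {η : ℝ // 0 < η},
        sInf {v : EReal | ∃ x1 ∈ Metric.ball x₀ ρ.1, ∃ x2 : X,
          dist x1 x2 < η.1 ∧ v = φ1 x1 + φ2 x2}) ∧
    (lambdaDag φ1 φ2 (Metric.ball x₀ δ) =
      ⨅ ρ : {ρ : ℝ // 0 < ρ ∧ ρ < δ}, lambdaCirc φ1 φ2 (Metric.closedBall x₀ ρ.1)) ∧
    (lambdaDag φ1 φ2 (Metric.ball x₀ δ) =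
      ⨅ ρ : {ρ : ℝ // 0 < ρ ∧ ρ < δ}, ⨆ η : {η : ℝ // 0 < η},
        sInf {v : EReal | ∃ x1 ∈ Metric.closedBall x₀ ρ.1, ∃ x2 : X,
          dist x1 x2 < η.1 ∧ v = φ1 x1 + φ2 x2}) := by
  set C : EReal := ⨅ ρ : {ρ : ℝ // 0 < ρ ∧ ρ < δ}, lambdaCirc φ1 φ2 (Metric.ball x₀ ρ.1)
    with hC
  -- small balls are essentially interior to both the open and closed δ-ball
  have hEssOpen : ∀ ρ : {ρ : ℝ // 0 < ρ ∧ ρ < δ}, EssInt (Metric.ball x₀ δ) (Metric.ball x₀ ρ.1) := by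
    rintro ⟨ρ, h0, h1⟩
    exact ⟨δ - ρ, by linarith, fun v hv => Metric.ball_subset_ball'
      (by have := Metric.mem_ball.mp hv; linarith)⟩
  have hEssClosed : ∀ ρ : {ρ : ℝ // 0 < ρ ∧ ρ < δ},
      EssInt (Metric.closedBall x₀ δ) (Metric.ball x₀ ρ.1) := by
    rintro ⟨ρ, h0, h1⟩
    exact ⟨δ - ρ, by linarith, fun v hv => (Metric.ball_subset_ball'
      (by have := Metric.mem_ball.mp hv; linarith)).trans Metric.ball_subset_closedBall⟩
  -- any essentially interior subset of the closed δ-ball sits in a smaller open ball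
  have hUpper : ∀ (V : Set X) (r : ℝ), 0 < r →
      (∀ v ∈ V, Metric.ball v r ⊆ Metric.closedBall x₀ δ) →
      C ≤ lambdaCirc φ1 φ2 V := by
    intro V r hr hV
    have hkey := essint_sub x₀ hδ hr hV
    have hm0 : 0 < min r δ := lt_min hr hδ
    have hmδ : min r δ ≤ δ := min_le_right r δ
    have hsub : V ⊆ Metric.ball x₀ (δ - min r δ / 2) := fun v hv =>
      Metric.mem_ball.mpr (lt_of_le_of_lt (hkey v hv) (by linarith))
    exact iInf_le_of_le ⟨δ - min r δ / 2, by constructor <;> linarith⟩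
      (lambdaCirc_anti φ1 φ2 hsub)
  -- A = C
  have hAC : lambdaDag φ1 φ2 (Metric.ball x₀ δ) = C := by
    apply le_antisymm
    · exact le_iInf fun ρ => iInf_le_of_le ⟨Metric.ball x₀ ρ.1, hEssOpen ρ⟩ le_rfl
    · refine le_iInf fun V => ?_
      obtain ⟨r, hr, hV⟩ := V.2
      exact hUpper V.1 r hr fun v hv => (hV v hv).trans Metric.ball_subset_closedBall
  -- B = C
  have hBC : lambdaDag φ1 φ2 (Metric.closedBall x₀ δ) = C := by
    apply le_antisymm
    · exact le_iInf fun ρ => iInf_le_of_le ⟨Metric.ball x₀ ρ.1, hEssClosed ρ⟩ le_rfl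
    · refine le_iInf fun V => ?_
      obtain ⟨r, hr, hV⟩ := V.2
      exact hUpper V.1 r hr hV
  -- E = C  (closed-ball version of lambdaCirc)
  have hEC : (⨅ ρ : {ρ : ℝ // 0 < ρ ∧ ρ < δ},
      lambdaCirc φ1 φ2 (Metric.closedBall x₀ ρ.1)) = C := by
    apply le_antisymm
    · exact le_iInf fun ρ => iInf_le_of_le ρ
        (lambdaCirc_anti φ1 φ2 Metric.ball_subset_closedBall)
    · refine le_iInf fun ρ => ?_
      obtain ⟨ρv, h0, h1⟩ := ρ
      refine iInf_le_of_le ⟨(ρv + δ) / 2, by constructor <;> linarith⟩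
        (lambdaCirc_anti φ1 φ2 (Metric.closedBall_subset_ball (by linarith)))
  -- D = C  (half-free open-ball version)
  have hDC : (⨅ ρ : {ρ : ℝ // 0 < ρ ∧ ρ < δ}, lamH φ1 φ2 (Metric.ball x₀ ρ.1)) = C := by
    apply le_antisymm
    · exact le_iInf fun ρ => iInf_le_of_le ρ (lamH_le_lambdaCirc φ1 φ2 _)
    · refine le_iInf fun ρ => ?_
      obtain ⟨ρv, h0, h1⟩ := ρ
      refine iInf_le_of_le ⟨(ρv + δ) / 2, by constructor <;> linarith⟩
        (lambdaCirc_le_lamH φ1 φ2 (r := ((ρv + δ) / 2 - ρv)) (by linarith)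
          (Metric.ball_subset_ball (by linarith)) ?_)
      intro x hx
      exact Metric.ball_subset_ball' (by have := Metric.mem_ball.mp hx; linarith)
  -- F = C  (half-free closed-ball version)
  have hFC : (⨅ ρ : {ρ : ℝ // 0 < ρ ∧ ρ < δ}, lamH φ1 φ2 (Metric.closedBall x₀ ρ.1)) = C := by
    apply le_antisymm
    · exact le_iInf fun ρ => iInf_le_of_le ρ
        ((lamH_le_lambdaCirc φ1 φ2 _).trans
          (lambdaCirc_anti φ1 φ2 Metric.ball_subset_closedBall))
    · refine le_iInf fun ρ => ?_
      obtain ⟨ρv, h0, h1⟩ := ρ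
      refine iInf_le_of_le ⟨(ρv + δ) / 2, by constructor <;> linarith⟩
        (lambdaCirc_le_lamH φ1 φ2 (r := ((ρv + δ) / 2 - ρv) / 2) (by linarith)
          (Metric.closedBall_subset_ball (by linarith)) ?_)
      intro x hx
      exact Metric.ball_subset_ball'
        (by have := Metric.mem_closedBall.mp hx; linarith)
  refine ⟨hAC.trans hBC.symm, hAC, ?_, hAC.trans hEC.symm, ?_⟩
  · exact hAC.trans hDC.symm
  · exact hAC.trans hFC.symm
end
end

section
/- If inf_U (φ1+φ2) > −∞ or Λ°_U(φ1,φ2) > −∞, then inf_U (φ1+φ2) − Λ°_U(φ1,φ2) ≤ Θ°_U(φ1,φ2). Similarly, if inf_U (φ1+φ2) > −∞ or Λ†_U(φ1,φ2) > −∞, then inf_U (φ1+φ2) − Λ†_U(φ1,φ2) ≤ Θ†_U(φ1,φ2). -/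
open Metric Set Filter

noncomputable section

private lemma flip' (a b : ℝ) (L : EReal) : (a : EReal) - L ≤ (b : EReal) ↔ (a : EReal) - (b : EReal) ≤ L := by
  induction L with
  | bot =>
    simp only [EReal.coe_sub_bot, top_le_iff, le_bot_iff]
    constructor
    · intro h; exact absurd h (EReal.coe_ne_top b)
    · intro h; rw [← EReal.coe_sub] at h; exact absurd h (EReal.coe_ne_bot _)
  | coe c =>
    rw [← EReal.coe_sub, ← EReal.coe_sub, EReal.coe_le_coe_iff, EReal.coe_le_coe_iff]
    constructor <;> intro h <;> linarith
  | top =>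
    simp only [EReal.sub_top]
    exact ⟨fun _ => le_top, fun _ => bot_le⟩

private lemma key {X : Type*} [MetricSpace X] (φ1 φ2 : X → EReal)
    (hbot1 : ∀ x, φ1 x ≠ ⊥) (hbot2 : ∀ x, φ2 x ≠ ⊥) (U V : Set X)
    (a : ℝ) (hm : infSum φ1 φ2 U = (a : EReal)) (η : ℝ) :
    (a : EReal) - sInf {v : EReal | ∃ x1 ∈ V, ∃ x2 ∈ V, dist x1 x2 < η ∧ v = φ1 x1 + φ2 x2}
      ≤ sSup (insert (0 : EReal)
        {v : EReal | ∃ x1 x2 : X, φ1 x1 < ⊤ ∧ x1 ∈ V ∧ φ2 x2 < ⊤ ∧ x2 ∈ V ∧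
          dist x1 x2 < η ∧ v = diamond φ1 φ2 U x1 x2}) := by
  set S := sSup (insert (0 : EReal)
        {v : EReal | ∃ x1 x2 : X, φ1 x1 < ⊤ ∧ x1 ∈ V ∧ φ2 x2 < ⊤ ∧ x2 ∈ V ∧
          dist x1 x2 < η ∧ v = diamond φ1 φ2 U x1 x2}) with hSdef
  rcases eq_or_ne S ⊤ with hStop | hStop
  · rw [hStop]; exact le_top
  have hSbot : S ≠ ⊥ := by
    intro h
    have h0 : (0 : EReal) ≤ S := le_sSup (mem_insert _ _)
    rw [h] at h0
    exact absurd (le_bot_iff.mp h0) (EReal.coe_ne_bot 0 ∘ by norm_cast)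
  obtain ⟨b, hb⟩ : ∃ b : ℝ, S = (b : EReal) := ⟨S.toReal, (EReal.coe_toReal hStop hSbot).symm⟩
  rw [hb, flip']
  refine le_sInf fun v hv => ?_
  obtain ⟨x1, hx1, x2, hx2, hd, rfl⟩ := hv
  rcases eq_or_ne (φ1 x1 + φ2 x2) ⊤ with hvt | hvt
  · rw [hvt]; exact le_top
  have h1t : φ1 x1 ≠ ⊤ := fun h => hvt (by rw [h]; exact EReal.top_add_of_ne_bot (hbot2 x2))
  have h2t : φ2 x2 ≠ ⊤ := fun h => hvt (by rw [h]; exact EReal.add_top_of_ne_bot (hbot1 x1))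
  obtain ⟨r1, hr1⟩ : ∃ r : ℝ, φ1 x1 = (r : EReal) := ⟨_, (EReal.coe_toReal h1t (hbot1 x1)).symm⟩
  obtain ⟨r2, hr2⟩ : ∃ r : ℝ, φ2 x2 = (r : EReal) := ⟨_, (EReal.coe_toReal h2t (hbot2 x2)).symm⟩
  have hdia : (a : EReal) - (φ1 x1 + φ2 x2) ≤ diamond φ1 φ2 U x1 x2 := by
    refine le_sInf fun w hw => ?_
    obtain ⟨x, hxU, rfl⟩ := hw
    refine le_trans ?_ (le_max_right _ _)
    have hmx : (a : EReal) ≤ φ1 x + φ2 x := hm ▸ sInf_le ⟨x, hxU, rfl⟩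
    rw [hr1, hr2]
    calc (a : EReal) - ((r1 : EReal) + (r2 : EReal))
        = ((a - r1 - r2 : ℝ) : EReal) := by norm_cast; ring
      _ = (a : EReal) - (r1 : EReal) - (r2 : EReal) := by norm_cast
      _ ≤ φ1 x + φ2 x - (r1 : EReal) - (r2 : EReal) :=
          EReal.sub_le_sub (EReal.sub_le_sub hmx le_rfl) le_rfl
  have hdS : diamond φ1 φ2 U x1 x2 ≤ S :=
    le_sSup (mem_insert_iff.mpr (Or.inr
      ⟨x1, x2, lt_top_iff_ne_top.mpr h1t, hx1, lt_top_iff_ne_top.mpr h2t, hx2, hd, rfl⟩))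
  have : (a : EReal) - (φ1 x1 + φ2 x2) ≤ (b : EReal) := le_trans hdia (le_trans hdS hb.le)
  exact (flip' a b _).mp this

/-- `inf_U (φ1+φ2) − Λ°_U ≤ Θ°_U` and `inf_U (φ1+φ2) − Λ†_U ≤ Θ†_U`, provided the
left-hand sides are well defined. -/
theorem stmt5 {X : Type*} [MetricSpace X] (φ1 φ2 : X → EReal)
    (hbot1 : ∀ x, φ1 x ≠ ⊥) (hbot2 : ∀ x, φ2 x ≠ ⊥) (U : Set X)
    (hne : ∃ x ∈ U, φ1 x < ⊤ ∧ φ2 x < ⊤) :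
    ((⊥ < infSum φ1 φ2 U ∨ ⊥ < lambdaCirc φ1 φ2 U) →
      infSum φ1 φ2 U - lambdaCirc φ1 φ2 U ≤ thetaCirc φ1 φ2 U) ∧
    ((⊥ < infSum φ1 φ2 U ∨ ⊥ < lambdaDag φ1 φ2 U) →
      infSum φ1 φ2 U - lambdaDag φ1 φ2 U ≤ thetaDag φ1 φ2 U) := by
  rcases eq_or_ne (infSum φ1 φ2 U) ⊥ with hmb | hmb
  · constructor <;> intro _ <;> rw [hmb, EReal.bot_sub] <;> exact bot_le
  have hmt : infSum φ1 φ2 U ≠ ⊤ := by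
    obtain ⟨x, hx, h1, h2⟩ := hne
    exact ne_top_of_le_ne_top (EReal.add_lt_top h1.ne h2.ne).ne (sInf_le ⟨x, hx, rfl⟩)
  obtain ⟨a, ha⟩ : ∃ a : ℝ, infSum φ1 φ2 U = (a : EReal) :=
    ⟨_, (EReal.coe_toReal hmt hmb).symm⟩
  constructor
  · intro _
    rw [ha]
    refine le_iInf fun η => ?_
    refine le_trans (EReal.sub_le_sub le_rfl (le_iSup
      (fun η : {η : ℝ // 0 < η} => sInf {v : EReal | ∃ x1 ∈ U, ∃ x2 ∈ U,
        dist x1 x2 < η.1 ∧ v = φ1 x1 + φ2 x2}) η)) ?_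
    exact key φ1 φ2 hbot1 hbot2 U U a ha η.1
  · intro _
    have hkey : ∀ V : {V : Set X // EssInt U V},
        (a : EReal) - lambdaCirc φ1 φ2 V.1 ≤ thetaDag φ1 φ2 U := by
      intro V
      refine le_trans (le_iInf fun η => ?_) (le_iSup (fun V : {V : Set X // EssInt U V} =>
        ⨅ η : {η : ℝ // 0 < η}, sSup (insert (0 : EReal)
          {v : EReal | ∃ x1 x2 : X, φ1 x1 < ⊤ ∧ x1 ∈ V.1 ∧ φ2 x2 < ⊤ ∧ x2 ∈ V.1 ∧
            dist x1 x2 < η.1 ∧ v = diamond φ1 φ2 U x1 x2})) V)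
      refine le_trans (EReal.sub_le_sub le_rfl (le_iSup
        (fun η : {η : ℝ // 0 < η} => sInf {v : EReal | ∃ x1 ∈ V.1, ∃ x2 ∈ V.1,
          dist x1 x2 < η.1 ∧ v = φ1 x1 + φ2 x2}) η)) ?_
      exact key φ1 φ2 hbot1 hbot2 U V.1 a ha η.1
    have hΘ0 : (0 : EReal) ≤ thetaDag φ1 φ2 U := by
      refine le_iSup_of_le ⟨∅, 1, one_pos, by simp⟩ (le_iInf fun η => le_sSup (mem_insert _ _))
    rcases eq_or_ne (thetaDag φ1 φ2 U) ⊤ with hΘt | hΘt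
    · rw [hΘt]; exact le_top
    have hΘb : thetaDag φ1 φ2 U ≠ ⊥ := fun h => by simp [h] at hΘ0
    obtain ⟨b, hb⟩ : ∃ b : ℝ, thetaDag φ1 φ2 U = (b : EReal) :=
      ⟨_, (EReal.coe_toReal hΘt hΘb).symm⟩
    rw [ha, hb, flip']
    refine le_iInf fun V => ?_
    rw [← flip', ← hb]
    exact hkey V
end
end

section
/- Θ†_U(φ1,φ2) = 0 if and only if Θ†_{U,X}(φ1,φ2) = 0, where Θ†_{U,X}(φ1,φ2) := sup_{V∈EI(U)} inf_{η>0} sup{ (φ1♦φ2)_X(x1,x2) : x1 ∈ dom φ1 ∩ V, x2 ∈ dom φ2 ∩ V, d(x1,x2) < η } is the quantity obtained from Θ†_U by replacing (φ1♦φ2)_U with (φ1♦φ2)_X (the infimum in the ♦-expression taken over all of X). -/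
open Metric Set Filter

noncomputable section

/-- `Θ†_U(φ1,φ2) = 0` iff `Θ†_{U,X}(φ1,φ2) = 0`. -/
theorem stmt6 {X : Type*} [MetricSpace X] (φ1 φ2 : X → EReal)
    (hbot1 : ∀ x, φ1 x ≠ ⊥) (hbot2 : ∀ x, φ2 x ≠ ⊥) (U : Set X)
    (hne : ∃ x ∈ U, φ1 x < ⊤ ∧ φ2 x < ⊤) :
    thetaDag φ1 φ2 U = 0 ↔ thetaDagW φ1 φ2 U Set.univ = 0 := by
  have hV0 : EssInt U (∅ : Set X) := ⟨1, one_pos, fun v hv => absurd hv (notMem_empty v)⟩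
  have hnonneg : ∀ W : Set X, (0 : EReal) ≤ thetaDagW φ1 φ2 U W := by
    intro W
    refine le_trans ?_ (le_iSup _ (⟨∅, hV0⟩ : {V : Set X // EssInt U V}))
    exact le_iInf fun η => le_sSup (mem_insert _ _)
  have hmono : ∀ (W W' : Set X), W ⊆ W' → ∀ x1 x2 : X,
      diamond φ1 φ2 W' x1 x2 ≤ diamond φ1 φ2 W x1 x2 := by
    intro W W' h x1 x2
    apply sInf_le_sInf
    rintro v ⟨x, hx, rfl⟩
    exact ⟨x, h hx, rfl⟩
  constructor
  · intro h
    refine le_antisymm ?_ (hnonneg _)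
    rw [← h]
    refine iSup_mono fun V => iInf_mono fun η => sSup_le ?_
    rintro v hv
    rcases hv with rfl | ⟨x1, x2, h1, hx1, h2, hx2, hd, rfl⟩
    · exact le_sSup (mem_insert _ _)
    · exact le_trans (hmono U univ (subset_univ U) x1 x2)
        (le_sSup (mem_insert_of_mem _ ⟨x1, x2, h1, hx1, h2, hx2, hd, rfl⟩))
  · intro h
    refine le_antisymm ?_ (hnonneg _)
    refine iSup_le ?_
    rintro ⟨V, ρ, hρ, hV⟩
    -- the inner inf for this V, with diamond over univ, is ≤ 0
    have hVle : (⨅ η : {η : ℝ // 0 < η},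
        sSup (insert (0 : EReal)
          {v : EReal | ∃ x1 x2 : X, φ1 x1 < ⊤ ∧ x1 ∈ V ∧ φ2 x2 < ⊤ ∧ x2 ∈ V ∧
            dist x1 x2 < η.1 ∧ v = diamond φ1 φ2 univ x1 x2})) ≤ 0 :=
      le_of_le_of_eq (le_iSup (fun V : {V : Set X // EssInt U V} => ⨅ η : {η : ℝ // 0 < η},
        sSup (insert (0 : EReal)
          {v : EReal | ∃ x1 x2 : X, φ1 x1 < ⊤ ∧ x1 ∈ V.1 ∧ φ2 x2 < ⊤ ∧ x2 ∈ V.1 ∧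
            dist x1 x2 < η.1 ∧ v = diamond φ1 φ2 univ x1 x2})) ⟨V, ρ, hρ, hV⟩) h
    -- it suffices to show the U-inf is ≤ ε for every positive real ε
    by_contra hcon
    push_neg at hcon
    obtain ⟨ε, hε0, hεlt⟩ := EReal.exists_between_coe_real hcon
    have hε : (0 : ℝ) < ε := by exact_mod_cast hε0
    set c : ℝ := min ε ρ with hc
    have hc0 : (0 : ℝ) < c := lt_min hε hρ
    have : (⨅ η : {η : ℝ // 0 < η},
        sSup (insert (0 : EReal)
          {v : EReal | ∃ x1 x2 : X, φ1 x1 < ⊤ ∧ x1 ∈ V ∧ φ2 x2 < ⊤ ∧ x2 ∈ V ∧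
            dist x1 x2 < η.1 ∧ v = diamond φ1 φ2 univ x1 x2})) < (c : EReal) :=
      lt_of_le_of_lt hVle (by exact_mod_cast hc0)
    rw [iInf_lt_iff] at this
    obtain ⟨η, hη⟩ := this
    -- now bound the U-sup at this η by ε
    have hUle : sSup (insert (0 : EReal)
        {v : EReal | ∃ x1 x2 : X, φ1 x1 < ⊤ ∧ x1 ∈ V ∧ φ2 x2 < ⊤ ∧ x2 ∈ V ∧
          dist x1 x2 < η.1 ∧ v = diamond φ1 φ2 U x1 x2}) ≤ (ε : EReal) := by
      refine sSup_le ?_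
      rintro v hv
      rcases hv with rfl | ⟨x1, x2, h1, hx1, h2, hx2, hd, rfl⟩
      · exact_mod_cast hε.le
      · have hdx : diamond φ1 φ2 univ x1 x2 < (c : EReal) := by
          refine lt_of_le_of_lt (le_sSup ?_) hη
          exact mem_insert_of_mem _ ⟨x1, x2, h1, hx1, h2, hx2, hd, rfl⟩
        rw [diamond, sInf_lt_iff] at hdx
        obtain ⟨w, ⟨x, -, rfl⟩, hwlt⟩ := hdx
        have hd1 : ((dist x x1 : ℝ) : EReal) < (c : EReal) :=
          lt_of_le_of_lt (le_trans (le_max_left _ _) (le_max_left _ _)) hwlt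
        have hd1' : dist x x1 < ρ := lt_of_lt_of_le (by exact_mod_cast hd1) (min_le_right ε ρ)
        have hxU : x ∈ U := hV x1 hx1 (by simpa [Metric.mem_ball, dist_comm] using hd1')
        have : diamond φ1 φ2 U x1 x2 ≤ max (max ((dist x x1 : ℝ) : EReal)
            ((dist x x2 : ℝ) : EReal)) (φ1 x + φ2 x - φ1 x1 - φ2 x2) :=
          sInf_le ⟨x, hxU, rfl⟩
        refine le_of_lt ?_
        calc diamond φ1 φ2 U x1 x2 ≤ _ := this
          _ < (c : EReal) := hwlt
          _ ≤ (ε : EReal) := by exact_mod_cast min_le_left ε ρ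
          
    exact absurd (lt_of_le_of_lt (le_trans (iInf_le _ ⟨η.1, η.2⟩) hUle) hεlt) (lt_irrefl _)
end
end

section
/- If Θ†_U(φ1,φ2) = 0, then inf_U (φ1+φ2) ≤ Λ†_U(φ1,φ2) (i.e. the pair (φ1,φ2) is quasiuniformly lower semicontinuous on U), and moreover Θ†_{U'}(φ1,φ2) = 0 for every subset U' ⊂ U. -/
open Metric Set Filter

noncomputable section

private lemma ereal_le_of_forall_sub {a b : EReal} (h : ∀ ε : ℝ, 0 < ε → a - (ε : EReal) ≤ b) :
    a ≤ b := by
  by_contra hab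
  push_neg at hab
  obtain ⟨r, hbr, hra⟩ := EReal.exists_between_coe_real hab
  obtain ⟨s, hbs, hsr⟩ := EReal.exists_between_coe_real hbr
  have hsr' : s < r := EReal.coe_lt_coe_iff.mp hsr
  have hε : (0 : ℝ) < r - s := sub_pos.mpr hsr'
  have h1 : a ≤ b + ((r - s : ℝ) : EReal) :=
    (EReal.sub_le_iff_le_add (Or.inl (EReal.coe_ne_bot _))
      (Or.inl (EReal.coe_ne_top _))).mp (h _ hε)
  have h2 : b + ((r - s : ℝ) : EReal) ≤ (s : EReal) + ((r - s : ℝ) : EReal) :=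
    add_le_add_left hbs.le _
  have h3 : (s : EReal) + ((r - s : ℝ) : EReal) = (r : EReal) := by
    rw [← EReal.coe_add]; norm_num
  exact absurd (h1.trans (h2.trans_eq h3)) (not_le.mpr hra)

private lemma thetaDagW_nonneg {X : Type*} [MetricSpace X] (φ1 φ2 : X → EReal) (U W : Set X) :
    (0 : EReal) ≤ thetaDagW φ1 φ2 U W := by
  unfold thetaDagW
  refine le_trans ?_ (le_iSup _ (⟨∅, 1, one_pos, by simp⟩ : {V : Set X // EssInt U V}))
  exact le_iInf fun _ => le_sSup (Set.mem_insert _ _)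

private lemma key_lemma {X : Type*} [MetricSpace X] (φ1 φ2 : X → EReal) (U W V : Set X)
    (hV : EssInt U V) (h : thetaDagW φ1 φ2 U W ≤ 0) (ε : ℝ) (hε : 0 < ε) :
    ∃ η : ℝ, 0 < η ∧ ∀ x1 x2 : X, φ1 x1 < ⊤ → x1 ∈ V → φ2 x2 < ⊤ → x2 ∈ V →
      dist x1 x2 < η → diamond φ1 φ2 W x1 x2 < (ε : EReal) := by
  unfold thetaDagW at h
  have h1 : (⨅ η : {η : ℝ // 0 < η},
      sSup (insert (0 : EReal)
        {v : EReal | ∃ x1 x2 : X, φ1 x1 < ⊤ ∧ x1 ∈ V ∧ φ2 x2 < ⊤ ∧ x2 ∈ V ∧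
          dist x1 x2 < η.1 ∧ v = diamond φ1 φ2 W x1 x2})) < (ε : EReal) := by
    have hlt : (0 : EReal) < (ε : EReal) := by exact_mod_cast hε
    have h2 : _ ≤ (0 : EReal) := le_trans (le_iSup _ (⟨V, hV⟩ : {V : Set X // EssInt U V})) h
    exact lt_of_le_of_lt h2 hlt
  obtain ⟨⟨η, hη⟩, hsup⟩ := iInf_lt_iff.mp h1
  refine ⟨η, hη, fun x1 x2 h1' hx1 h2' hx2 hd => lt_of_le_of_lt (le_sSup ?_) hsup⟩
  exact Set.mem_insert_iff.mpr (Or.inr ⟨x1, x2, h1', hx1, h2', hx2, hd, rfl⟩)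

/-- If `Θ†_U(φ1,φ2) = 0`, then `(φ1,φ2)` is quasiuniformly lower semicontinuous on `U`
and `Θ†_{U'}(φ1,φ2) = 0` for every `U' ⊆ U`. -/
theorem stmt7 {X : Type*} [MetricSpace X] (φ1 φ2 : X → EReal)
    (hbot1 : ∀ x, φ1 x ≠ ⊥) (hbot2 : ∀ x, φ2 x ≠ ⊥) (U : Set X)
    (hne : ∃ x ∈ U, φ1 x < ⊤ ∧ φ2 x < ⊤)
    (h : thetaDag φ1 φ2 U = 0) :
    infSum φ1 φ2 U ≤ lambdaDag φ1 φ2 U ∧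
      ∀ U' : Set X, U' ⊆ U → thetaDag φ1 φ2 U' = 0 := by
  have hθ : thetaDagW φ1 φ2 U U ≤ 0 := le_of_eq h
  constructor
  · -- quasiuniform lower semicontinuity
    unfold lambdaDag lambdaCirc
    refine le_iInf fun ⟨V, hV⟩ => ?_
    refine ereal_le_of_forall_sub fun ε hε => ?_
    obtain ⟨η, hη, hkey⟩ := key_lemma φ1 φ2 U U V hV hθ ε hε
    refine le_trans ?_ (le_iSup _ (⟨η, hη⟩ : {η : ℝ // 0 < η}))
    refine le_sInf ?_
    rintro v ⟨x1, hx1, x2, hx2, hd, rfl⟩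
    by_cases h1 : φ1 x1 = ⊤
    · rw [h1, EReal.top_add_of_ne_bot (hbot2 x2)]; exact le_top
    by_cases h2 : φ2 x2 = ⊤
    · rw [h2, EReal.add_top_of_ne_bot (hbot1 x1)]; exact le_top
    have hdia := hkey x1 x2 (lt_top_iff_ne_top.mpr h1) hx1 (lt_top_iff_ne_top.mpr h2) hx2 hd
    obtain ⟨w, ⟨x, hxU, rfl⟩, hw⟩ := sInf_lt_iff.mp hdia
    have h3 : φ1 x + φ2 x - φ1 x1 - φ2 x2 < (ε : EReal) :=
      lt_of_le_of_lt (le_max_right _ _) hw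
    set r1 := (φ1 x1).toReal with hr1
    set r2 := (φ2 x2).toReal with hr2
    have e1 : ((r1 : ℝ) : EReal) = φ1 x1 := EReal.coe_toReal h1 (hbot1 x1)
    have e2 : ((r2 : ℝ) : EReal) = φ2 x2 := EReal.coe_toReal h2 (hbot2 x2)
    rw [← e1, ← e2] at h3
    have h4 : φ1 x + φ2 x - (r1 : EReal) < (ε : EReal) + (r2 : EReal) :=
      (EReal.sub_lt_iff (Or.inl (EReal.coe_ne_bot _)) (Or.inl (EReal.coe_ne_top _))).mp h3
    have h5 : φ1 x + φ2 x < ((ε : EReal) + (r2 : EReal)) + (r1 : EReal) :=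
      (EReal.sub_lt_iff (Or.inl (EReal.coe_ne_bot _)) (Or.inl (EReal.coe_ne_top _))).mp h4
    have h6 : infSum φ1 φ2 U ≤ φ1 x + φ2 x := sInf_le ⟨x, hxU, rfl⟩
    have h7 : infSum φ1 φ2 U ≤ (ε : EReal) + ((r1 : EReal) + (r2 : EReal)) := by
      rw [add_assoc, add_comm (r2 : EReal) (r1 : EReal)] at h5
      exact (h6.trans_lt h5).le
    rw [← e1, ← e2]
    exact EReal.sub_le_of_le_add' h7
  · -- stability under subsets
    intro U' hsub
    refine le_antisymm ?_ (thetaDagW_nonneg φ1 φ2 U' U')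
    unfold thetaDag thetaDagW
    refine iSup_le fun ⟨V', hV'⟩ => ?_
    obtain ⟨ρ, hρ, hball⟩ := hV'
    refine ereal_le_of_forall_sub fun ε hε =>
      EReal.sub_le_of_le_add' (le_trans ?_ (le_of_eq (add_zero _).symm))
    set ε' := min ε ρ with hε'def
    have hε' : 0 < ε' := lt_min hε hρ
    have hVU : EssInt U V' := ⟨ρ, hρ, fun v hv => (hball v hv).trans hsub⟩
    obtain ⟨η, hη, hkey⟩ := key_lemma φ1 φ2 U U V' hVU hθ ε' hε'
    refine le_trans (iInf_le _ (⟨η, hη⟩ : {η : ℝ // 0 < η})) ?_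
    refine sSup_le ?_
    rintro v (rfl | ⟨x1, x2, h1, hx1, h2, hx2, hd, rfl⟩)
    · exact_mod_cast hε.le
    have hdia := hkey x1 x2 h1 hx1 h2 hx2 hd
    obtain ⟨w, ⟨x, hxU, rfl⟩, hw⟩ := sInf_lt_iff.mp hdia
    have hd1 : ((dist x x1 : ℝ) : EReal) < (ε' : EReal) :=
      lt_of_le_of_lt ((le_max_left _ _).trans (le_max_left _ _)) hw
    have hd1' : dist x x1 < ρ :=
      lt_of_lt_of_le (EReal.coe_lt_coe_iff.mp hd1) (min_le_right ε ρ)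
    have hxU' : x ∈ U' := hball x1 hx1 (Metric.mem_ball.mpr hd1')
    have hle : diamond φ1 φ2 U' x1 x2 ≤
        max (max ((dist x x1 : ℝ) : EReal) ((dist x x2 : ℝ) : EReal))
          (φ1 x + φ2 x - φ1 x1 - φ2 x2) := sInf_le ⟨x, hxU', rfl⟩
    refine le_of_lt ?_
    calc diamond φ1 φ2 U' x1 x2 ≤ _ := hle
      _ < (ε' : EReal) := hw
      _ ≤ (ε : EReal) := EReal.coe_le_coe_iff.mpr (min_le_left ε ρ)
end
end

section
/- The pair (φ1,φ2) is firmly uniformly lower semicontinuous on U (i.e. Θ°_U(φ1,φ2) = 0) if and only if for every pair of sequences {x_{1k}} ⊂ dom φ1 ∩ U, {x_{2k}} ⊂ dom φ2 ∩ U with d(x_{1k}, x_{2k}) → 0 as k → +∞, there exists a sequence {x_k} ⊂ U such that d(x_k, x_{1k}) → 0, d(x_k, x_{2k}) → 0, and limsup_{k→+∞} ((φ1+φ2)(x_k) − φ1(x_{1k}) − φ2(x_{2k})) ≤ 0. -/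
open Metric Set Filter

noncomputable section

lemma theta_nonneg {X : Type*} [MetricSpace X] (φ1 φ2 : X → EReal) (U : Set X) :
    (0:EReal) ≤ thetaCirc φ1 φ2 U :=
  le_iInf fun _ => le_sSup (mem_insert _ _)

lemma theta_step {X : Type*} [MetricSpace X] (φ1 φ2 : X → EReal) (U : Set X)
    (h : thetaCirc φ1 φ2 U = 0) (n : ℕ) :
    ∃ η > (0:ℝ), ∀ y1 y2 : X, φ1 y1 < ⊤ → y1 ∈ U → φ2 y2 < ⊤ → y2 ∈ U →
      dist y1 y2 < η →
      ∃ x ∈ U, dist x y1 < 1/(n+1) ∧ dist x y2 < 1/(n+1) ∧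
        φ1 x + φ2 x - φ1 y1 - φ2 y2 < ((1/(n+1 : ℝ) : ℝ) : EReal) := by
  have hε : (0:EReal) < ((1/(n+1:ℝ) : ℝ) : EReal) := by
    exact_mod_cast (by positivity : (0:ℝ) < 1/(n+1:ℝ))
  have hlt : thetaCirc φ1 φ2 U < ((1/(n+1:ℝ) : ℝ) : EReal) := h ▸ hε
  rw [thetaCirc, iInf_lt_iff] at hlt
  obtain ⟨η, hη⟩ := hlt
  refine ⟨η.1, η.2, fun y1 y2 h1 hU1 h2 hU2 hd => ?_⟩
  have hmem : diamond φ1 φ2 U y1 y2 ∈ insert (0 : EReal)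
      {v : EReal | ∃ x1 x2 : X, φ1 x1 < ⊤ ∧ x1 ∈ U ∧ φ2 x2 < ⊤ ∧ x2 ∈ U ∧
        dist x1 x2 < η.1 ∧ v = diamond φ1 φ2 U x1 x2} :=
    mem_insert_of_mem _ ⟨y1, y2, h1, hU1, h2, hU2, hd, rfl⟩
  have hdlt : diamond φ1 φ2 U y1 y2 < ((1/(n+1:ℝ) : ℝ) : EReal) :=
    lt_of_le_of_lt (le_sSup hmem) hη
  rw [diamond, sInf_lt_iff] at hdlt
  obtain ⟨v, ⟨x, hxU, rfl⟩, hv⟩ := hdlt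
  rw [max_lt_iff, max_lt_iff] at hv
  exact ⟨x, hxU, by exact_mod_cast hv.1.1, by exact_mod_cast hv.1.2, hv.2⟩


/-- Sequential characterization of firm uniform lower semicontinuity. -/
theorem stmt9 {X : Type*} [MetricSpace X] (φ1 φ2 : X → EReal)
    (hbot1 : ∀ x, φ1 x ≠ ⊥) (hbot2 : ∀ x, φ2 x ≠ ⊥) (U : Set X)
    (hne : ∃ x ∈ U, φ1 x < ⊤ ∧ φ2 x < ⊤) :
    thetaCirc φ1 φ2 U = 0 ↔
      ∀ x1 x2 : ℕ → X,
        (∀ k, φ1 (x1 k) < ⊤ ∧ x1 k ∈ U) →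
        (∀ k, φ2 (x2 k) < ⊤ ∧ x2 k ∈ U) →
        Filter.Tendsto (fun k => dist (x1 k) (x2 k)) Filter.atTop (nhds 0) →
        ∃ x : ℕ → X, (∀ k, x k ∈ U) ∧
          Filter.Tendsto (fun k => dist (x k) (x1 k)) Filter.atTop (nhds 0) ∧
          Filter.Tendsto (fun k => dist (x k) (x2 k)) Filter.atTop (nhds 0) ∧
          Filter.limsup (fun k => φ1 (x k) + φ2 (x k) - φ1 (x1 k) - φ2 (x2 k))
            Filter.atTop ≤ 0 := by
  classical
  constructor
  · -- forward direction
    intro h x1 x2 h1 h2 htend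
    choose η ηpos hη using theta_step φ1 φ2 U h
    -- K n : threshold after which dist (x1 k) (x2 k) < η n
    have hev : ∀ n : ℕ, ∃ K : ℕ, ∀ k ≥ K, dist (x1 k) (x2 k) < η n := fun n =>
      eventually_atTop.1 (htend.eventually_lt_const (ηpos n))
    choose K hK using hev
    set M : ℕ → ℕ := fun n => (Finset.range (n+1)).sup K with hM
    have hKM : ∀ n, K n ≤ M n := fun n =>
      Finset.le_sup (Finset.mem_range.2 (Nat.lt_succ_self n))
    set nk : ℕ → ℕ := fun k => Nat.findGreatest (fun n => M n ≤ k) k with hnk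
    -- P n k : there is a good point at level 1/(n+1)
    set P : ℕ → ℕ → Prop := fun n k => ∃ x ∈ U, dist x (x1 k) < 1/(n+1) ∧
        dist x (x2 k) < 1/(n+1) ∧
        φ1 x + φ2 x - φ1 (x1 k) - φ2 (x2 k) < ((1/(n+1:ℝ) : ℝ) : EReal) with hP
    have hQ : ∀ n k, K n ≤ k → P n k := fun n k hk =>
      hη n (x1 k) (x2 k) (h1 k).1 (h1 k).2 (h2 k).1 (h2 k).2 (hK n k hk)
    have key : ∀ k, M (nk k) ≤ k → P (nk k) k := fun k hk =>
      hQ _ _ (le_trans (hKM _) hk)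
    set x : ℕ → X := fun k =>
      if hc : M (nk k) ≤ k then (key k hc).choose else x1 k with hx
    have hxU : ∀ k, x k ∈ U := by
      intro k
      by_cases hc : M (nk k) ≤ k
      · simp only [hx, dif_pos hc]; exact (key k hc).choose_spec.1
      · simp only [hx, dif_neg hc]; exact (h1 k).2
    have hxgood : ∀ k, M (nk k) ≤ k → dist (x k) (x1 k) < 1/(nk k + 1) ∧
        dist (x k) (x2 k) < 1/(nk k + 1) ∧
        φ1 (x k) + φ2 (x k) - φ1 (x1 k) - φ2 (x2 k) < ((1/(nk k + 1:ℝ) : ℝ) : EReal) := by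
      intro k hc
      simp only [hx, dif_pos hc]
      exact (key k hc).choose_spec.2
    -- eventual level bound
    have hlev : ∀ n : ℕ, ∀ᶠ k in atTop, dist (x k) (x1 k) < 1/(n+1) ∧
        dist (x k) (x2 k) < 1/(n+1) ∧
        φ1 (x k) + φ2 (x k) - φ1 (x1 k) - φ2 (x2 k) < ((1/(n+1:ℝ) : ℝ) : EReal) := by
      intro n
      filter_upwards [eventually_ge_atTop (max (n+1) (M (n+1)))] with k hk
      have hk1 : n + 1 ≤ k := le_trans (le_max_left _ _) hk
      have hk2 : M (n+1) ≤ k := le_trans (le_max_right _ _) hk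
      have hge : n + 1 ≤ nk k := Nat.le_findGreatest hk1 hk2
      have hMk : M (nk k) ≤ k := Nat.findGreatest_spec (P := fun n => M n ≤ k) hk1 hk2
      obtain ⟨a, b, c⟩ := hxgood k hMk
      have hbound : 1/(nk k + 1 : ℝ) ≤ 1/(n+1 : ℝ) := by
        apply one_div_le_one_div_of_le (by positivity)
        have : (n:ℝ) + 1 ≤ (nk k : ℝ) := by exact_mod_cast hge
        linarith
      refine ⟨lt_of_lt_of_le a hbound, lt_of_lt_of_le b hbound, lt_of_lt_of_le c ?_⟩
      exact_mod_cast hbound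
    have htend' : ∀ (y : ℕ → X), (∀ n : ℕ, ∀ᶠ k in atTop, dist (x k) (y k) < 1/(n+1)) →
        Tendsto (fun k => dist (x k) (y k)) atTop (nhds 0) := by
      intro y hy
      rw [Metric.tendsto_atTop]
      intro ε hε
      obtain ⟨n, hn⟩ := exists_nat_one_div_lt hε
      obtain ⟨N, hN⟩ := eventually_atTop.1 (hy n)
      refine ⟨N, fun k hk => ?_⟩
      simp only [Real.dist_eq, sub_zero]
      rw [abs_of_nonneg dist_nonneg]
      exact lt_trans (hN k hk) hn
    refine ⟨x, hxU, htend' x1 (fun n => (hlev n).mono fun k hk => hk.1),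
      htend' x2 (fun n => (hlev n).mono fun k hk => hk.2.1), ?_⟩
    -- limsup ≤ 0
    by_contra hcon
    push_neg at hcon
    obtain ⟨z, hz0, hzl⟩ := EReal.exists_between_coe_real hcon
    have hz0' : (0:ℝ) < z := by exact_mod_cast hz0
    obtain ⟨n, hn⟩ := exists_nat_one_div_lt hz0'
    have : limsup (fun k => φ1 (x k) + φ2 (x k) - φ1 (x1 k) - φ2 (x2 k)) atTop
        ≤ ((1/(n+1:ℝ) : ℝ) : EReal) :=
      limsup_le_of_le (by isBoundedDefault)
        ((hlev n).mono fun k hk => le_of_lt hk.2.2)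
    have : limsup (fun k => φ1 (x k) + φ2 (x k) - φ1 (x1 k) - φ2 (x2 k)) atTop
        < (z : EReal) := lt_of_le_of_lt this (by exact_mod_cast hn)
    exact absurd hzl (not_lt.2 (le_of_lt this))
  · -- backward direction
    intro hseq
    refine le_antisymm ?_ (theta_nonneg φ1 φ2 U)
    by_contra hcon
    push_neg at hcon
    obtain ⟨z, hz0, hzθ⟩ := EReal.exists_between_coe_real hcon
    have hz0' : (0:ℝ) < z := by exact_mod_cast hz0
    -- for each k, a bad pair at scale 1/(k+1)
    have hbad : ∀ k : ℕ, ∃ y1 y2 : X, φ1 y1 < ⊤ ∧ y1 ∈ U ∧ φ2 y2 < ⊤ ∧ y2 ∈ U ∧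
        dist y1 y2 < 1/(k+1) ∧ (z : EReal) < diamond φ1 φ2 U y1 y2 := by
      intro k
      have hpos : (0:ℝ) < 1/(k+1:ℝ) := by positivity
      have hle : thetaCirc φ1 φ2 U ≤ sSup (insert (0 : EReal)
          {v : EReal | ∃ y1 y2 : X, φ1 y1 < ⊤ ∧ y1 ∈ U ∧ φ2 y2 < ⊤ ∧ y2 ∈ U ∧
            dist y1 y2 < (⟨1/(k+1:ℝ), hpos⟩ : {η : ℝ // 0 < η}).1 ∧
            v = diamond φ1 φ2 U y1 y2}) := iInf_le _ _
      have : (z : EReal) < sSup (insert (0 : EReal)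
          {v : EReal | ∃ y1 y2 : X, φ1 y1 < ⊤ ∧ y1 ∈ U ∧ φ2 y2 < ⊤ ∧ y2 ∈ U ∧
            dist y1 y2 < 1/(k+1:ℝ) ∧ v = diamond φ1 φ2 U y1 y2}) :=
        lt_of_lt_of_le hzθ hle
      obtain ⟨v, hv, hzv⟩ := lt_sSup_iff.1 this
      rcases hv with hv0 | ⟨y1, y2, e1, e2, e3, e4, e5, rfl⟩
      · exfalso; rw [hv0] at hzv
        exact absurd hz0 (not_lt.2 (le_of_lt hzv))
      · exact ⟨y1, y2, e1, e2, e3, e4, e5, hzv⟩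
    choose y1 y2 hy1top hy1U hy2top hy2U hyd hydiam using hbad
    have htend : Tendsto (fun k => dist (y1 k) (y2 k)) atTop (nhds 0) := by
      apply squeeze_zero (fun k => dist_nonneg) (fun k => le_of_lt (hyd k))
      exact tendsto_one_div_add_atTop_nhds_zero_nat
    obtain ⟨x, hxU, ht1, ht2, hls⟩ :=
      hseq y1 y2 (fun k => ⟨hy1top k, hy1U k⟩) (fun k => ⟨hy2top k, hy2U k⟩) htend
    have he1 : ∀ᶠ k in atTop, dist (x k) (y1 k) < z := ht1.eventually_lt_const hz0'
    have he2 : ∀ᶠ k in atTop, dist (x k) (y2 k) < z := ht2.eventually_lt_const hz0'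
    have he3 : ∀ᶠ k in atTop,
        φ1 (x k) + φ2 (x k) - φ1 (y1 k) - φ2 (y2 k) < (z : EReal) :=
      eventually_lt_of_limsup_lt (lt_of_le_of_lt hls hz0)
    obtain ⟨k, hk1, hk2, hk3⟩ := (he1.and (he2.and he3)).exists
    have helem : diamond φ1 φ2 U (y1 k) (y2 k) ≤
        max (max ((dist (x k) (y1 k) : ℝ) : EReal) ((dist (x k) (y2 k) : ℝ) : EReal))
          (φ1 (x k) + φ2 (x k) - φ1 (y1 k) - φ2 (y2 k)) :=
      sInf_le ⟨x k, hxU k, rfl⟩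
    have hlt : max (max ((dist (x k) (y1 k) : ℝ) : EReal) ((dist (x k) (y2 k) : ℝ) : EReal))
          (φ1 (x k) + φ2 (x k) - φ1 (y1 k) - φ2 (y2 k)) < (z : EReal) := by
      rw [max_lt_iff, max_lt_iff]
      exact ⟨⟨by exact_mod_cast hk1, by exact_mod_cast hk2⟩, hk3⟩
    exact absurd (lt_of_le_of_lt (le_trans (le_of_lt (hydiam k)) helem) hlt) (lt_irrefl _)
end
end

section
/- The pair (φ1,φ2) is firmly quasiuniformly lower semicontinuous on U (i.e. Θ†_U(φ1,φ2) = 0) if and only if for every pair of sequences {x_{1k}} ⊂ dom φ1 ∩ U and {x_{2k}} ⊂ dom φ2 such that the set {x_{1k} : k ∈ ℕ} is an essentially interior subset of U and d(x_{1k}, x_{2k}) → 0 as k → +∞, there exists a sequence {x_k} ⊂ X such that d(x_k, x_{1k}) → 0, d(x_k, x_{2k}) → 0, and limsup_{k→+∞} ((φ1+φ2)(x_k) − φ1(x_{1k}) − φ2(x_{2k})) ≤ 0. -/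
open Metric Set Filter

noncomputable section

lemma essInt_empty' {X : Type*} [MetricSpace X] (U : Set X) : EssInt U (∅ : Set X) :=
  ⟨1, one_pos, fun v hv => absurd hv (Set.notMem_empty v)⟩

lemma thetaDag_nonneg' {X : Type*} [MetricSpace X] (φ1 φ2 : X → EReal) (U : Set X) :
    0 ≤ thetaDag φ1 φ2 U := by
  unfold thetaDag thetaDagW
  exact le_iSup_of_le ⟨∅, essInt_empty' U⟩ (le_iInf fun η => le_sSup (Set.mem_insert _ _))

/-- Sequential characterization of firm quasiuniform lower semicontinuity. -/
theorem stmt10 {X : Type*} [MetricSpace X] (φ1 φ2 : X → EReal)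
    (hbot1 : ∀ x, φ1 x ≠ ⊥) (hbot2 : ∀ x, φ2 x ≠ ⊥) (U : Set X)
    (hne : ∃ x ∈ U, φ1 x < ⊤ ∧ φ2 x < ⊤) :
    thetaDag φ1 φ2 U = 0 ↔
      ∀ x1 x2 : ℕ → X,
        (∀ k, φ1 (x1 k) < ⊤ ∧ x1 k ∈ U) →
        (∀ k, φ2 (x2 k) < ⊤) →
        EssInt U (Set.range x1) →
        Filter.Tendsto (fun k => dist (x1 k) (x2 k)) Filter.atTop (nhds 0) →
        ∃ x : ℕ → X,
          Filter.Tendsto (fun k => dist (x k) (x1 k)) Filter.atTop (nhds 0) ∧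
          Filter.Tendsto (fun k => dist (x k) (x2 k)) Filter.atTop (nhds 0) ∧
          Filter.limsup (fun k => φ1 (x k) + φ2 (x k) - φ1 (x1 k) - φ2 (x2 k))
            Filter.atTop ≤ 0 := by
  classical
  constructor
  · -- θ† = 0 → sequential property
    intro h x1 x2 hx1 hx2 hEI hdist
    obtain ⟨ρ, hρ, hball⟩ := hEI
    obtain ⟨K₀, hK₀⟩ := Filter.eventually_atTop.mp
      (hdist.eventually_lt_const (by positivity : (0:ℝ) < ρ/2))
    set V₀ : Set X := Set.range x1 ∪ x2 '' (Set.Ici K₀) with hV₀def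
    have hV₀ : EssInt U V₀ := by
      refine ⟨ρ/2, by positivity, fun v hv => ?_⟩
      rcases hv with hv | ⟨k, hk, rfl⟩
      · exact (Metric.ball_subset_ball (by linarith)).trans (hball v hv)
      · intro y hy
        apply hball (x1 k) (Set.mem_range_self k)
        rw [Metric.mem_ball] at hy ⊢
        have h1 : dist (x2 k) (x1 k) < ρ/2 := by
          rw [dist_comm]; exact hK₀ k hk
        calc dist y (x1 k) ≤ dist y (x2 k) + dist (x2 k) (x1 k) := dist_triangle _ _ _
          _ < ρ/2 + ρ/2 := by linarith
          _ = ρ := by ring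
    unfold thetaDag thetaDagW at h
    have hle : (⨅ η : {η : ℝ // 0 < η}, sSup (insert (0:EReal)
        {v : EReal | ∃ a1 a2 : X, φ1 a1 < ⊤ ∧ a1 ∈ V₀ ∧ φ2 a2 < ⊤ ∧ a2 ∈ V₀ ∧
          dist a1 a2 < η.1 ∧ v = diamond φ1 φ2 U a1 a2})) ≤ 0 := by
      refine le_of_le_of_eq (le_iSup (fun V : {V : Set X // EssInt U V} =>
        ⨅ η : {η : ℝ // 0 < η}, sSup (insert (0:EReal)
          {v : EReal | ∃ a1 a2 : X, φ1 a1 < ⊤ ∧ a1 ∈ V.1 ∧ φ2 a2 < ⊤ ∧ a2 ∈ V.1 ∧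
            dist a1 a2 < η.1 ∧ v = diamond φ1 φ2 U a1 a2}))
        (⟨V₀, hV₀⟩ : {V : Set X // EssInt U V})) h
    have key : ∀ n : ℕ, ∃ Mn : ℕ, ∀ k ≥ Mn, ∃ x ∈ U,
        dist x (x1 k) < 1/(n+1) ∧ dist x (x2 k) < 1/(n+1) ∧
        φ1 x + φ2 x - φ1 (x1 k) - φ2 (x2 k) < ((1/(n+1 : ℝ) : ℝ) : EReal) := by
      intro n
      have hpos : (0:EReal) < ((1/(n+1 : ℝ) : ℝ) : EReal) := by
        exact_mod_cast (by positivity : (0:ℝ) < 1/(n+1))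
      have hlt := lt_of_le_of_lt hle hpos
      rw [iInf_lt_iff] at hlt
      obtain ⟨⟨η, hη⟩, hsup⟩ := hlt
      obtain ⟨M₁, hM₁⟩ := Filter.eventually_atTop.mp (hdist.eventually_lt_const hη)
      refine ⟨max M₁ K₀, fun k hk => ?_⟩
      have hk1 : k ≥ M₁ := le_trans (le_max_left _ _) hk
      have hk0 : k ≥ K₀ := le_trans (le_max_right _ _) hk
      have hmem : diamond φ1 φ2 U (x1 k) (x2 k) ∈ insert (0:EReal)
          {v : EReal | ∃ a1 a2 : X, φ1 a1 < ⊤ ∧ a1 ∈ V₀ ∧ φ2 a2 < ⊤ ∧ a2 ∈ V₀ ∧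
            dist a1 a2 < η ∧ v = diamond φ1 φ2 U a1 a2} :=
        Set.mem_insert_of_mem _ ⟨x1 k, x2 k, (hx1 k).1,
          Set.mem_union_left _ (Set.mem_range_self k), hx2 k,
          Set.mem_union_right _ ⟨k, hk0, rfl⟩, hM₁ k hk1, rfl⟩
      have hdia := lt_of_le_of_lt (le_sSup hmem) hsup
      rw [diamond, sInf_lt_iff] at hdia
      obtain ⟨v, ⟨y, hyU, rfl⟩, hv⟩ := hdia
      rw [max_lt_iff, max_lt_iff] at hv
      obtain ⟨⟨h1, h2⟩, h3⟩ := hv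
      exact ⟨y, hyU, by exact_mod_cast h1, by exact_mod_cast h2, h3⟩
    choose M hM using key
    set N : ℕ → ℕ := fun n => (Finset.range (n+1)).sup M + n with hNdef
    have hMN : ∀ n, M n ≤ N n := fun n =>
      le_trans (Finset.le_sup (Finset.mem_range.mpr (Nat.lt_succ_self n))) (Nat.le_add_right _ _)
    have hNmono : Monotone N := fun a b hab =>
      add_le_add (Finset.sup_mono (Finset.range_subset_range.mpr (by omega))) hab
    have hnN : ∀ n, n ≤ N n := fun n => Nat.le_add_left n _
    set c : ℕ → ℕ := fun k => Nat.findGreatest (fun n => N n ≤ k) k with hcdef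
    have hc1 : ∀ n k, N n ≤ k → n ≤ c k := fun n k hk =>
      Nat.le_findGreatest (le_trans (hnN n) hk) hk
    have hc2 : ∀ k, N 0 ≤ k → N (c k) ≤ k := by
      intro k hk
      exact Nat.findGreatest_spec (P := fun n => N n ≤ k) (Nat.zero_le k) hk
    have hex : ∀ k, N 0 ≤ k → ∃ y ∈ U,
        dist y (x1 k) < 1/(c k+1) ∧ dist y (x2 k) < 1/(c k+1) ∧
        φ1 y + φ2 y - φ1 (x1 k) - φ2 (x2 k) < ((1/(c k+1 : ℝ) : ℝ) : EReal) :=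
      fun k hk => hM (c k) k (le_trans (hMN _) (hc2 k hk))
    set x : ℕ → X := fun k => if hk : N 0 ≤ k then (hex k hk).choose else x1 k with hxdef
    have hbound : ∀ n k, N n ≤ k →
        dist (x k) (x1 k) < 1/(n+1) ∧ dist (x k) (x2 k) < 1/(n+1) ∧
        φ1 (x k) + φ2 (x k) - φ1 (x1 k) - φ2 (x2 k) < ((1/(n+1 : ℝ) : ℝ) : EReal) := by
      intro n k hk
      have h0 : N 0 ≤ k := le_trans (hNmono (Nat.zero_le n)) hk
      have hck : n ≤ c k := hc1 n k hk
      have hle' : (1:ℝ)/(c k+1) ≤ 1/(n+1) := by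
        apply one_div_le_one_div_of_le (by positivity)
        exact_mod_cast Nat.succ_le_succ hck
      have hxk : x k = (hex k h0).choose := by
        simp only [hxdef, dif_pos h0]
      obtain ⟨hU, h1, h2, h3⟩ := (hex k h0).choose_spec
      rw [hxk]
      refine ⟨lt_of_lt_of_le h1 hle', lt_of_lt_of_le h2 hle', lt_of_lt_of_le h3 ?_⟩
      exact_mod_cast hle'
    have ht1 : Tendsto (fun k => dist (x k) (x1 k)) atTop (nhds 0) := by
      rw [Metric.tendsto_atTop]
      intro ε hε
      obtain ⟨n, hn⟩ := exists_nat_one_div_lt hε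
      refine ⟨N n, fun k hk => ?_⟩
      rw [Real.dist_eq, sub_zero, abs_of_nonneg dist_nonneg]
      exact lt_trans (hbound n k hk).1 hn
    have ht2 : Tendsto (fun k => dist (x k) (x2 k)) atTop (nhds 0) := by
      rw [Metric.tendsto_atTop]
      intro ε hε
      obtain ⟨n, hn⟩ := exists_nat_one_div_lt hε
      refine ⟨N n, fun k hk => ?_⟩
      rw [Real.dist_eq, sub_zero, abs_of_nonneg dist_nonneg]
      exact lt_trans (hbound n k hk).2.1 hn
    refine ⟨x, ht1, ht2, ?_⟩
    refine le_of_forall_gt_imp_ge_of_dense fun b hb => ?_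
    obtain ⟨r, hr0, hrb⟩ := EReal.exists_between_coe_real hb
    have hr0' : (0:ℝ) < r := by exact_mod_cast hr0
    obtain ⟨n, hn⟩ := exists_nat_one_div_lt hr0'
    refine limsup_le_of_le isCobounded_le_of_bot ?_
    filter_upwards [Filter.eventually_atTop.mpr ⟨N n, fun k hk => (hbound n k hk).2.2⟩] with k hk
    refine le_of_lt (lt_trans (lt_trans hk ?_) hrb)
    exact_mod_cast hn
  · -- sequential property → θ† = 0
    intro h
    refine le_antisymm ?_ (thetaDag_nonneg' φ1 φ2 U)
    by_contra hcon
    rw [not_le] at hcon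
    unfold thetaDag thetaDagW at hcon
    rw [lt_iSup_iff] at hcon
    obtain ⟨⟨V, hEI⟩, hV⟩ := hcon
    obtain ⟨ρ, hρ, hball⟩ := hEI
    obtain ⟨c, hc0, hcV⟩ := EReal.exists_between_coe_real hV
    have hc0' : (0:ℝ) < c := by exact_mod_cast hc0
    have key : ∀ k : ℕ, ∃ a1 a2 : X, φ1 a1 < ⊤ ∧ a1 ∈ V ∧ φ2 a2 < ⊤ ∧ a2 ∈ V ∧
        dist a1 a2 < 1/(k+1) ∧ (c : EReal) < diamond φ1 φ2 U a1 a2 := by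
      intro k
      have hηpos : (0:ℝ) < 1/(k+1) := by positivity
      have hlt := lt_of_lt_of_le hcV
        (iInf_le (fun η : {η : ℝ // 0 < η} => sSup (insert (0:EReal)
          {v : EReal | ∃ a1 a2 : X, φ1 a1 < ⊤ ∧ a1 ∈ V ∧ φ2 a2 < ⊤ ∧ a2 ∈ V ∧
            dist a1 a2 < η.1 ∧ v = diamond φ1 φ2 U a1 a2})) ⟨1/(k+1), hηpos⟩)
      rw [lt_sSup_iff] at hlt
      obtain ⟨v, hv, hcv⟩ := hlt
      rcases Set.mem_insert_iff.mp hv with rfl | ⟨a1, a2, h1, hV1, h2, hV2, hd, rfl⟩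
      · exact absurd hcv (not_lt.mpr hc0.le)
      · exact ⟨a1, a2, h1, hV1, h2, hV2, hd, hcv⟩
    choose a1 a2 h1 hV1 h2 hV2 hd hdia using key
    have hVsubU : ∀ v ∈ V, v ∈ U := fun v hv => hball v hv (Metric.mem_ball_self hρ)
    have hd0 : Tendsto (fun k => dist (a1 k) (a2 k)) atTop (nhds 0) :=
      squeeze_zero (fun k => dist_nonneg) (fun k => (hd k).le)
        tendsto_one_div_add_atTop_nhds_zero_nat
    have hrange : EssInt U (Set.range a1) := by
      refine ⟨ρ, hρ, fun v hv => ?_⟩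
      obtain ⟨k, rfl⟩ := hv
      exact hball _ (hV1 k)
    obtain ⟨x, hx1, hx2, hls⟩ := h a1 a2 (fun k => ⟨h1 k, hVsubU _ (hV1 k)⟩) h2 hrange hd0
    have e1 : ∀ᶠ k in atTop, dist (x k) (a1 k) < min c ρ :=
      hx1.eventually_lt_const (lt_min hc0' hρ)
    have e2 : ∀ᶠ k in atTop, dist (x k) (a2 k) < c := hx2.eventually_lt_const hc0'
    have e3 : ∀ᶠ k in atTop, φ1 (x k) + φ2 (x k) - φ1 (a1 k) - φ2 (a2 k) < (c:EReal) :=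
      eventually_lt_of_limsup_lt (lt_of_le_of_lt hls hc0)
    obtain ⟨k, hk1, hk2, hk3⟩ := (e1.and (e2.and e3)).exists
    have hxU : x k ∈ U := hball _ (hV1 k)
      (by rw [Metric.mem_ball]; exact lt_of_lt_of_le hk1 (min_le_right _ _))
    have hmem : max (max ((dist (x k) (a1 k) : ℝ) : EReal) ((dist (x k) (a2 k) : ℝ) : EReal))
        (φ1 (x k) + φ2 (x k) - φ1 (a1 k) - φ2 (a2 k)) ∈
        {v : EReal | ∃ y ∈ U, v = max (max ((dist y (a1 k) : ℝ) : EReal)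
          ((dist y (a2 k) : ℝ) : EReal)) (φ1 y + φ2 y - φ1 (a1 k) - φ2 (a2 k))} :=
      ⟨x k, hxU, rfl⟩
    have hcmax := lt_of_lt_of_le (hdia k) (sInf_le hmem)
    have hmax : max (max ((dist (x k) (a1 k) : ℝ) : EReal) ((dist (x k) (a2 k) : ℝ) : EReal))
        (φ1 (x k) + φ2 (x k) - φ1 (a1 k) - φ2 (a2 k)) < (c:EReal) := by
      apply max_lt (max_lt ?_ ?_) hk3
      · exact_mod_cast lt_of_lt_of_le hk1 (min_le_left _ _)
      · exact_mod_cast hk2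
    exact absurd hcmax (not_lt.mpr hmax.le)
end
end

section
/- Suppose the pair (φ1,φ2) is firmly uniformly (respectively, firmly quasiuniformly) lower semicontinuous on U, and let g : X → ℝ be uniformly continuous on U. Then the pair (φ1, φ2 + g) is firmly uniformly (respectively, firmly quasiuniformly) lower semicontinuous on U. -/
open Metric Set Filter

noncomputable section

/-- If an `EReal` is at most every positive real, it is at most `0`. -/
lemma EReal.le_zero_of_forall_pos {a : EReal} (h : ∀ ε : ℝ, 0 < ε → a ≤ ε) : a ≤ 0 := by
  by_contra hc
  push_neg at hc
  obtain ⟨r, hr0, hra⟩ := EReal.lt_iff_exists_real_btwn.mp hc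
  exact absurd (h r (by exact_mod_cast hr0)) (not_le.mpr hra)

/-- Core perturbation step. -/
lemma core_step {X : Type*} [MetricSpace X] (φ1 φ2 : X → EReal) (g : X → ℝ)
    (hbot1 : ∀ x, φ1 x ≠ ⊥) (hbot2 : ∀ x, φ2 x ≠ ⊥) (U V : Set X) (hVU : V ⊆ U)
    (η ε' ε δ : ℝ) (hε : 0 < ε) (hε'0 : 0 < ε')
    (hδ : ∀ x ∈ U, ∀ y ∈ U, dist x y < δ → |g x - g y| < ε / 2)
    (hε'δ : ε' ≤ δ) (hε'ε : ε' + ε / 2 ≤ ε)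
    (hS : sSup (insert (0 : EReal)
      {v : EReal | ∃ x1 x2 : X, φ1 x1 < ⊤ ∧ x1 ∈ V ∧ φ2 x2 < ⊤ ∧ x2 ∈ V ∧
        dist x1 x2 < η ∧ v = diamond φ1 φ2 U x1 x2}) < (ε' : EReal)) :
    sSup (insert (0 : EReal)
      {v : EReal | ∃ x1 x2 : X, φ1 x1 < ⊤ ∧ x1 ∈ V ∧ (φ2 x2 + (g x2 : EReal)) < ⊤ ∧ x2 ∈ V ∧
        dist x1 x2 < η ∧ v = diamond φ1 (fun x => φ2 x + (g x : EReal)) U x1 x2})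
      ≤ (ε : EReal) := by
  apply sSup_le
  rintro v (rfl | ⟨x1, x2, h1, hx1, h2, hx2, hd, rfl⟩)
  · exact_mod_cast hε.le
  have h2' : φ2 x2 < ⊤ := by
    by_contra hc
    rw [top_le_iff.mp (not_lt.mp hc), EReal.top_add_coe] at h2
    exact absurd h2 (lt_irrefl _)
  have hmem : diamond φ1 φ2 U x1 x2 ∈
      {v : EReal | ∃ x1 x2 : X, φ1 x1 < ⊤ ∧ x1 ∈ V ∧ φ2 x2 < ⊤ ∧ x2 ∈ V ∧
        dist x1 x2 < η ∧ v = diamond φ1 φ2 U x1 x2} :=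
    ⟨x1, x2, h1, hx1, h2', hx2, hd, rfl⟩
  have hold : diamond φ1 φ2 U x1 x2 < (ε' : EReal) :=
    lt_of_le_of_lt (le_sSup (Set.mem_insert_of_mem _ hmem)) hS
  rw [diamond, sInf_lt_iff] at hold
  obtain ⟨w, ⟨x, hxU, rfl⟩, hw⟩ := hold
  rw [max_lt_iff, max_lt_iff] at hw
  obtain ⟨⟨hd1, hd2⟩, hsum⟩ := hw
  have hd1' : dist x x1 < ε' := by exact_mod_cast hd1
  have hd2' : dist x x2 < ε' := by exact_mod_cast hd2
  set a1 := (φ1 x1).toReal with ha1def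
  set a2 := (φ2 x2).toReal with ha2def
  have ha1 : φ1 x1 = (a1 : EReal) := (EReal.coe_toReal h1.ne (hbot1 x1)).symm
  have ha2 : φ2 x2 = (a2 : EReal) := (EReal.coe_toReal h2'.ne (hbot2 x2)).symm
  rw [ha1, ha2] at hsum
  have hTbot : φ1 x + φ2 x ≠ ⊥ := by
    intro hc
    rcases EReal.add_eq_bot_iff.mp hc with h | h
    exacts [hbot1 x h, hbot2 x h]
  have hTtop : φ1 x + φ2 x ≠ ⊤ := by
    intro hc
    rw [hc, EReal.top_sub_coe, EReal.top_sub_coe] at hsum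
    exact absurd hsum (not_lt.mpr le_top)
  set t := (φ1 x + φ2 x).toReal with htdef
  have hT : φ1 x + φ2 x = (t : EReal) := (EReal.coe_toReal hTtop hTbot).symm
  rw [hT, ← EReal.coe_sub, ← EReal.coe_sub, EReal.coe_lt_coe_iff] at hsum
  have hgb : |g x - g x2| < ε / 2 :=
    hδ x hxU x2 (hVU hx2) (lt_of_lt_of_le hd2' hε'δ)
  rw [diamond]
  refine sInf_le_of_le ⟨x, hxU, rfl⟩ ?_
  refine max_le (max_le ?_ ?_) ?_
  · exact EReal.coe_le_coe_iff.mpr (by linarith)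
  · exact EReal.coe_le_coe_iff.mpr (by linarith)
  · show φ1 x + (φ2 x + (g x : EReal)) - φ1 x1 - (φ2 x2 + (g x2 : EReal)) ≤ (ε : EReal)
    rw [← add_assoc, hT, ha1, ha2, ← EReal.coe_add, ← EReal.coe_add, ← EReal.coe_sub,
      ← EReal.coe_sub, EReal.coe_le_coe_iff]
    linarith [(abs_lt.mp hgb).2]

/-- Firm uniform and firm quasiuniform lower semicontinuity are stable under
uniformly continuous perturbations of one of the functions. -/
theorem stmt11 {X : Type*} [MetricSpace X] (φ1 φ2 : X → EReal) (g : X → ℝ)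
    (hbot1 : ∀ x, φ1 x ≠ ⊥) (hbot2 : ∀ x, φ2 x ≠ ⊥) (U : Set X)
    (hne : ∃ x ∈ U, φ1 x < ⊤ ∧ φ2 x < ⊤)
    (hg : UniformContinuousOn g U) :
    (thetaCirc φ1 φ2 U = 0 →
      thetaCirc φ1 (fun x => φ2 x + (g x : EReal)) U = 0) ∧
    (thetaDag φ1 φ2 U = 0 →
      thetaDag φ1 (fun x => φ2 x + (g x : EReal)) U = 0) := by
  rw [Metric.uniformContinuousOn_iff] at hg
  constructor
  · intro h
    refine le_antisymm ?_ ?_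
    · apply EReal.le_zero_of_forall_pos
      intro ε hε
      obtain ⟨δ, hδ0, hδ⟩ := hg (ε / 2) (by linarith)
      have hδ' : ∀ x ∈ U, ∀ y ∈ U, dist x y < δ → |g x - g y| < ε / 2 := by
        intro x hx y hy hxy
        simpa [Real.dist_eq] using hδ x hx y hy hxy
      set ε' := min (ε / 2) δ with hε'def
      have hε'0 : 0 < ε' := lt_min (by linarith) hδ0
      have hlt : thetaCirc φ1 φ2 U < (ε' : EReal) := by
        rw [h]; exact_mod_cast hε'0
      rw [thetaCirc, iInf_lt_iff] at hlt
      obtain ⟨η, hη⟩ := hlt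
      refine le_trans (iInf_le _ η) ?_
      exact core_step φ1 φ2 g hbot1 hbot2 U U (subset_refl U) η.1 ε' ε δ hε hε'0
        hδ' (min_le_right _ _) (by linarith [min_le_left (ε/2) δ]) hη
    · exact le_iInf fun η => le_sSup (Set.mem_insert _ _)
  · intro h
    rw [thetaDag, thetaDagW] at h ⊢
    refine le_antisymm ?_ ?_
    · apply iSup_le
      intro V
      have hVU : V.1 ⊆ U := by
        obtain ⟨ρ, hρ0, hb⟩ := V.2
        exact fun v hv => hb v hv (Metric.mem_ball_self hρ0)
      apply EReal.le_zero_of_forall_pos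
      intro ε hε
      obtain ⟨δ, hδ0, hδ⟩ := hg (ε / 2) (by linarith)
      have hδ' : ∀ x ∈ U, ∀ y ∈ U, dist x y < δ → |g x - g y| < ε / 2 := by
        intro x hx y hy hxy
        simpa [Real.dist_eq] using hδ x hx y hy hxy
      set ε' := min (ε / 2) δ with hε'def
      have hε'0 : 0 < ε' := lt_min (by linarith) hδ0
      have hle := le_iSup (fun V : {V : Set X // EssInt U V} =>
        ⨅ η : {η : ℝ // 0 < η},
          sSup (insert (0 : EReal)
            {v : EReal | ∃ x1 x2 : X, φ1 x1 < ⊤ ∧ x1 ∈ V.1 ∧ φ2 x2 < ⊤ ∧ x2 ∈ V.1 ∧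
              dist x1 x2 < η.1 ∧ v = diamond φ1 φ2 U x1 x2})) V
      rw [h] at hle
      have hlt := lt_of_le_of_lt hle (show (0 : EReal) < (ε' : EReal) by exact_mod_cast hε'0)
      rw [iInf_lt_iff] at hlt
      obtain ⟨η, hη⟩ := hlt
      refine le_trans (iInf_le _ η) ?_
      exact core_step φ1 φ2 g hbot1 hbot2 U V.1 hVU η.1 ε' ε δ hε hε'0
        hδ' (min_le_right _ _) (by linarith [min_le_left (ε/2) δ]) hη
    · refine le_trans ?_ (le_iSup _ (⟨∅, 1, one_pos, by simp⟩ : {V : Set X // EssInt U V}))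
      exact le_iInf fun η => le_sSup (Set.mem_insert _ _)
end
end

section
/- If φ2 is real-valued and uniformly continuous on U, then the pair (φ1,φ2) is firmly uniformly lower semicontinuous on U, i.e. Θ°_U(φ1,φ2) = 0. -/
open Metric Set Filter

noncomputable section

/-- If `φ2` is real-valued and uniformly continuous on `U`, then `(φ1,φ2)` is firmly
uniformly lower semicontinuous on `U`. -/
theorem stmt12 {X : Type*} [MetricSpace X] (φ1 : X → EReal)
    (hbot1 : ∀ x, φ1 x ≠ ⊥) (φ2 : X → ℝ) (U : Set X)
    (hne : ∃ x ∈ U, φ1 x < ⊤)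
    (hφ2 : UniformContinuousOn φ2 U) :
    thetaCirc φ1 (fun x => (φ2 x : EReal)) U = 0 := by
  have key : ∀ ε : ℝ, 0 < ε → thetaCirc φ1 (fun x => (φ2 x : EReal)) U ≤ (ε : EReal) := by
    intro ε hε
    rw [Metric.uniformContinuousOn_iff] at hφ2
    obtain ⟨δ, hδ, hδ'⟩ := hφ2 ε hε
    have hη0 : 0 < min δ ε := lt_min hδ hε
    refine le_trans (iInf_le _ ⟨min δ ε, hη0⟩) ?_
    apply sSup_le
    rintro v (rfl | ⟨x1, x2, h1top, h1U, h2top, h2U, hd, rfl⟩)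
    · exact_mod_cast hε.le
    · have hmem : (max (max ((dist x1 x1 : ℝ) : EReal) ((dist x1 x2 : ℝ) : EReal))
          (φ1 x1 + ((φ2 x1 : ℝ) : EReal) - φ1 x1 - ((φ2 x2 : ℝ) : EReal))) ∈
          {v : EReal | ∃ x ∈ U,
            v = max (max ((dist x x1 : ℝ) : EReal) ((dist x x2 : ℝ) : EReal))
              (φ1 x + ((φ2 x : ℝ) : EReal) - φ1 x1 - ((φ2 x2 : ℝ) : EReal))} :=
        ⟨x1, h1U, rfl⟩
      refine le_trans (sInf_le hmem) ?_
      have hdd : dist x1 x2 < δ := lt_of_lt_of_le hd (min_le_left _ _)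
      have hde : dist x1 x2 ≤ ε := le_of_lt (lt_of_lt_of_le hd (min_le_right _ _))
      have hφd : dist (φ2 x1) (φ2 x2) < ε := hδ' x1 h1U x2 h2U hdd
      have hsub : φ2 x1 - φ2 x2 ≤ ε := by
        rw [Real.dist_eq] at hφd
        exact le_of_lt (lt_of_le_of_lt (le_abs_self _) hφd)
      refine max_le (max_le ?_ ?_) ?_
      · rw [dist_self]; exact_mod_cast hε.le
      · exact_mod_cast hde
      · obtain ⟨r, hr⟩ : ∃ r : ℝ, φ1 x1 = (r : EReal) :=
          ⟨(φ1 x1).toReal, (EReal.coe_toReal h1top.ne (hbot1 x1)).symm⟩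
        rw [hr]
        have : ((r : EReal) + (φ2 x1 : ℝ) - r - (φ2 x2 : ℝ)) =
            ((r + φ2 x1 - r - φ2 x2 : ℝ) : EReal) := by
          norm_cast
        rw [this]
        have : r + φ2 x1 - r - φ2 x2 = φ2 x1 - φ2 x2 := by ring
        rw [this]
        exact_mod_cast hsub
  refine le_antisymm ?_ (le_iInf fun η => le_sSup (Set.mem_insert _ _))
  by_contra h
  push_neg at h
  obtain ⟨c, hc0, hcθ⟩ := EReal.exists_between_coe_real h
  have hc : (0 : ℝ) < c := by exact_mod_cast hc0
  exact absurd (key c hc) (not_le.mpr hcθ)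
end
end

section
/- Suppose φ1 and φ2 are lower semicontinuous on U (i.e. their restrictions to U are lower semicontinuous) and inf_U φ2 > −∞. If the sublevel set {x ∈ U | φ1(x) ≤ c} is compact for every c ∈ ℝ, then the pair (φ1,φ2) is uniformly lower semicontinuous on U, i.e. inf_U (φ1+φ2) ≤ Λ°_U(φ1,φ2). -/
open Metric Set Filter

noncomputable section

open Topology

lemma split_lt {s t : EReal} (b : ℝ) (hs : s ≠ ⊥) (ht : t ≠ ⊥)
    (h : (b : EReal) < s + t) : ∃ p q : ℝ, (p : EReal) < s ∧ (q : EReal) < t ∧ b ≤ p + q := by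
  rcases eq_or_ne s ⊤ with rfl | hst
  · rcases eq_or_ne t ⊤ with rfl | htt
    · exact ⟨b, 0, by simp [EReal.coe_lt_top], by simp [EReal.coe_lt_top], by simp⟩
    · refine ⟨b - (t.toReal - 1), t.toReal - 1, EReal.coe_lt_top _, ?_, by linarith⟩
      have := EReal.coe_toReal htt ht
      rw [← this]
      exact_mod_cast sub_one_lt _
  · rcases eq_or_ne t ⊤ with rfl | htt
    · refine ⟨s.toReal - 1, b - (s.toReal - 1), ?_, EReal.coe_lt_top _, by linarith⟩
      have := EReal.coe_toReal hst hs
      rw [← this]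
      exact_mod_cast sub_one_lt _
    · have hs' := EReal.coe_toReal hst hs
      have ht' := EReal.coe_toReal htt ht
      set a := s.toReal; set c := t.toReal
      have hb : b < a + c := by
        rw [← hs', ← ht'] at h
        exact_mod_cast h
      set δ := (a + c - b) / 2 with hδ
      have hδpos : 0 < δ := by simp [hδ]; linarith
      refine ⟨a - δ, c - δ, ?_, ?_, by linarith⟩
      · rw [← hs']; exact_mod_cast sub_lt_self a hδpos
      · rw [← ht']; exact_mod_cast sub_lt_self c hδpos

/-- Compactness of the sublevel sets of `φ1` on `U` guarantees uniform lower
semicontinuity of `(φ1,φ2)` on `U`. -/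
theorem stmt13 {X : Type*} [MetricSpace X] (φ1 φ2 : X → EReal)
    (hbot1 : ∀ x, φ1 x ≠ ⊥) (hbot2 : ∀ x, φ2 x ≠ ⊥) (U : Set X)
    (hne : ∃ x ∈ U, φ1 x < ⊤ ∧ φ2 x < ⊤)
    (hlsc1 : LowerSemicontinuousOn φ1 U) (hlsc2 : LowerSemicontinuousOn φ2 U)
    (hbound : ⊥ < sInf (φ2 '' U))
    (hcompact : ∀ c : ℝ, IsCompact {x | x ∈ U ∧ φ1 x ≤ (c : EReal)}) :
    infSum φ1 φ2 U ≤ lambdaCirc φ1 φ2 U := by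
  -- real lower bound m for φ2 on U
  obtain ⟨m, hm1, hm2⟩ := EReal.lt_iff_exists_real_btwn.1 hbound
  have hmle : ∀ x ∈ U, (m : EReal) ≤ φ2 x := fun x hx =>
    le_of_lt (lt_of_lt_of_le hm2 (sInf_le ⟨x, hx, rfl⟩))
  rw [← EReal.le_of_forall_lt_iff_le]
  intro b hb
  -- choose sequences
  have H : ∀ n : ℕ, ∃ y1, y1 ∈ U ∧ ∃ y2, y2 ∈ U ∧ dist y1 y2 < 1 / (n + 1) ∧
      φ1 y1 + φ2 y2 < (b : EReal) := by
    intro n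
    have hpos : (0 : ℝ) < 1 / (n + 1) := by positivity
    have hinf : sInf {v : EReal | ∃ x1 ∈ U, ∃ x2 ∈ U, dist x1 x2 < 1 / (n + 1) ∧
        v = φ1 x1 + φ2 x2} < (b : EReal) :=
      lt_of_le_of_lt (le_iSup_of_le ⟨1 / (n + 1), hpos⟩ le_rfl) hb
    obtain ⟨v, ⟨y1, hy1, y2, hy2, hd, rfl⟩, hv⟩ := sInf_lt_iff.1 hinf
    exact ⟨y1, hy1, y2, hy2, hd, hv⟩
  choose x1 hx1U x2 hx2U hd hs using H
  -- φ1 (x1 n) ≤ b - m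
  have hsub : ∀ n, x1 n ∈ {x | x ∈ U ∧ φ1 x ≤ ((b - m : ℝ) : EReal)} := by
    intro n
    refine ⟨hx1U n, ?_⟩
    by_contra hc
    push_neg at hc
    have h1 : ((b - m : ℝ) : EReal) + (m : EReal) < φ1 (x1 n) + m :=
      EReal.add_lt_add_right_coe hc m
    have h2 : φ1 (x1 n) + (m : EReal) ≤ φ1 (x1 n) + φ2 (x2 n) :=
      add_le_add_right (hmle _ (hx2U n)) _
    have : ((b : ℝ) : EReal) < (b : EReal) := by
      calc ((b : ℝ) : EReal) = ((b - m : ℝ) : EReal) + (m : EReal) := by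
            rw [← EReal.coe_add]; norm_num
        _ < φ1 (x1 n) + m := h1
        _ ≤ φ1 (x1 n) + φ2 (x2 n) := h2
        _ < b := hs n
    exact absurd this (lt_irrefl _)
  obtain ⟨xb, hxbK, ψ, hψ, hψt⟩ := (hcompact (b - m)).tendsto_subseq hsub
  have hψtop : Tendsto ψ atTop atTop := hψ.tendsto_atTop
  -- x2 ∘ ψ also tends to xb
  have hd0 : Tendsto (fun k => dist (x1 (ψ k)) (x2 (ψ k))) atTop (𝓝 0) := by
    have h1 : Tendsto (fun n : ℕ => 1 / ((n : ℝ) + 1)) atTop (𝓝 0) :=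
      tendsto_one_div_add_atTop_nhds_zero_nat
    refine squeeze_zero (fun k => dist_nonneg) (fun k => (hd (ψ k)).le) (h1.comp hψtop)
  have hψt2 : Tendsto (fun k => x2 (ψ k)) atTop (𝓝 xb) := by
    rw [tendsto_iff_dist_tendsto_zero]
    have hle : ∀ k, dist (x2 (ψ k)) xb ≤
        dist (x1 (ψ k)) (x2 (ψ k)) + dist (x1 (ψ k)) xb := fun k => by
      rw [dist_comm (x1 (ψ k)) (x2 (ψ k))]; exact dist_triangle _ _ _
    have h2 : Tendsto (fun k => dist (x1 (ψ k)) xb) atTop (𝓝 0) :=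
      tendsto_iff_dist_tendsto_zero.1 hψt
    have := hd0.add h2
    rw [add_zero] at this
    exact squeeze_zero (fun k => dist_nonneg) hle this
  have hxbU : xb ∈ U := hxbK.1
  -- show φ1 xb + φ2 xb ≤ b
  have hkey : φ1 xb + φ2 xb ≤ (b : EReal) := by
    by_contra hc
    push_neg at hc
    obtain ⟨p, q, hp, hq, hpq⟩ := split_lt b (hbot1 xb) (hbot2 xb) hc
    have e1 : ∀ᶠ x in 𝓝[U] xb, (p : EReal) < φ1 x := hlsc1 xb hxbU _ hp
    have e2 : ∀ᶠ x in 𝓝[U] xb, (q : EReal) < φ2 x := hlsc2 xb hxbU _ hq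
    have t1 : Tendsto (fun k => x1 (ψ k)) atTop (𝓝[U] xb) :=
      tendsto_nhdsWithin_of_tendsto_nhds_of_eventually_within _ hψt
        (Eventually.of_forall fun k => hx1U (ψ k))
    have t2 : Tendsto (fun k => x2 (ψ k)) atTop (𝓝[U] xb) :=
      tendsto_nhdsWithin_of_tendsto_nhds_of_eventually_within _ hψt2
        (Eventually.of_forall fun k => hx2U (ψ k))
    have := ((t1.eventually e1).and (t2.eventually e2)).exists
    obtain ⟨k, hk1, hk2⟩ := this
    have : ((p + q : ℝ) : EReal) < φ1 (x1 (ψ k)) + φ2 (x2 (ψ k)) := by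
      rw [EReal.coe_add]; exact EReal.add_lt_add hk1 hk2
    have hlt : ((b : ℝ) : EReal) < (b : EReal) :=
      lt_of_le_of_lt (by exact_mod_cast hpq) (this.trans (hs (ψ k)))
    exact absurd hlt (lt_irrefl _)
  exact le_trans (sInf_le ⟨xb, hxbU, rfl⟩) hkey
end
end

section
/- Let X be a reflexive Banach space, U ⊂ X convex and bounded, and let φ1, φ2 : X → ℝ ∪ {+∞} be weakly sequentially lower semicontinuous on U, with dom φ1 ∩ dom φ2 ∩ U ≠ ∅. Then the pair (φ1,φ2) is quasiuniformly lower semicontinuous on U, i.e. inf_U (φ1+φ2) ≤ Λ†_U(φ1,φ2). -/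
open Metric Set Filter

noncomputable section

open TopologicalSpace NormedSpace Topology

section Aux
variable {E : Type*} [NormedAddCommGroup E] [NormedSpace ℝ E]

lemma exists_dual_annihilator (M : Submodule ℝ E) {x : E} (hx : x ∉ closure (M : Set E)) :
    ∃ f : E →L[ℝ] ℝ, (∀ m ∈ M, f m = 0) ∧ f x ≠ 0 := by
  obtain ⟨f, u, hfu, hux⟩ :=
    geometric_hahn_banach_closed_point (M.topologicalClosure.convex)
      (M.isClosed_topologicalClosure)
      (by simpa [Submodule.topologicalClosure_coe] using hx)
  have h0 : (0:E) ∈ M.topologicalClosure := Submodule.zero_mem _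
  have hu0 : (0:ℝ) < u := by simpa using hfu 0 h0
  refine ⟨f, ?_, ?_⟩
  · intro m hm
    by_contra hfm
    have hmem : ((2*u) / f m) • m ∈ M.topologicalClosure :=
      Submodule.smul_mem _ _ (Submodule.le_topologicalClosure M hm)
    have := hfu _ hmem
    rw [map_smul, smul_eq_mul, div_mul_cancel₀ _ hfm] at this
    linarith
  · intro h; rw [h] at hux; linarith


lemma separableSpace_of_dual_separable [h : SeparableSpace (E →L[ℝ] ℝ)] : SeparableSpace E := by
  obtain ⟨D, hDc, hDd⟩ := exists_countable_dense (E →L[ℝ] ℝ)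
  have hch : ∀ f : E →L[ℝ] ℝ, ∃ e : E, ‖e‖ ≤ 1 ∧ ‖f‖ / 2 ≤ f e := by
    intro f
    rcases eq_or_ne f 0 with rfl | hf
    · exact ⟨0, by simp⟩
    · have hlt : ‖f‖ / 2 < ‖f‖ := by
        have : 0 < ‖f‖ := norm_pos_iff.2 hf
        linarith
      obtain ⟨z, hz1, hz2⟩ := f.exists_lt_apply_of_lt_opNorm hlt
      rcases le_or_gt 0 (f z) with h' | h'
      · exact ⟨z, hz1.le, by rw [Real.norm_eq_abs, abs_of_nonneg h'] at hz2; linarith⟩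
      · refine ⟨-z, by simpa using hz1.le, ?_⟩
        rw [Real.norm_eq_abs, abs_of_neg h'] at hz2
        simpa using hz2.le
  choose e he1 he2 using hch
  set M : Submodule ℝ E := Submodule.span ℝ (e '' D) with hM
  have hdense : Dense (M : Set E) := by
    by_contra hnd
    obtain ⟨x, hx⟩ : ∃ x, x ∉ closure (M : Set E) := by
      by_contra hc
      push_neg at hc
      exact hnd fun x => hc x
    obtain ⟨f, hfM, hfx⟩ := exists_dual_annihilator M hx
    have hf0 : f ≠ 0 := fun h' => hfx (by rw [h']; rfl)
    have hfpos : 0 < ‖f‖ := norm_pos_iff.2 hf0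
    obtain ⟨g, hgD, hgf⟩ := hDd.exists_dist_lt f (show (0:ℝ) < ‖f‖/4 by linarith)
    rw [dist_eq_norm] at hgf
    have hgn : 3/4 * ‖f‖ ≤ ‖g‖ := by
      have := norm_sub_norm_le f g
      linarith [this]
    have hfe : f (e g) = 0 := hfM _ (Submodule.subset_span ⟨g, hgD, rfl⟩)
    have hge : ‖g‖ / 2 ≤ g (e g) := he2 g
    have hdiff : |g (e g) - f (e g)| ≤ ‖f‖ / 4 := by
      have : |(g - f) (e g)| ≤ ‖g - f‖ * ‖e g‖ := (g - f).le_opNorm (e g)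
      have h2 : ‖g - f‖ = ‖f - g‖ := norm_sub_rev _ _
      have h3 : ‖g - f‖ * ‖e g‖ ≤ ‖g - f‖ * 1 :=
        mul_le_mul_of_nonneg_left (he1 g) (norm_nonneg _)
      simp only [ContinuousLinearMap.sub_apply] at this
      nlinarith [norm_nonneg (g - f), he1 g]
    rw [hfe, sub_zero] at hdiff
    have := abs_le.mp hdiff
    linarith
  have : IsSeparable (M : Set E) := ((hDc.image e).isSeparable).span
  have hcl : IsSeparable (closure (M : Set E)) := this.closure
  rw [hdense.closure_eq] at hcl
  exact isSeparable_univ_iff.mp hcl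

end Aux

section Aux2
variable {X : Type*} [NormedAddCommGroup X] [NormedSpace ℝ X]

lemma subspace_reflexive (hrefl : Function.Surjective (inclusionInDoubleDual ℝ X))
    (Y : Submodule ℝ X) (hY : IsClosed (Y : Set X)) :
    Function.Surjective (inclusionInDoubleDual ℝ Y) := by
  intro ξ
  -- restriction map Dual X → Dual Y
  let R : StrongDual ℝ X →L[ℝ] StrongDual ℝ Y := (ContinuousLinearMap.compL ℝ Y X ℝ).flip Y.subtypeL
  have hR : ∀ (f : StrongDual ℝ X) (y : Y), R f y = f y := fun f y => rfl
  let ξ' : StrongDual ℝ (StrongDual ℝ X) := ContinuousLinearMap.comp (σ₁₂ := RingHom.id ℝ) (σ₂₃ := RingHom.id ℝ) ξ R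
  obtain ⟨x, hx⟩ := hrefl ξ'
  have hxY : x ∈ Y := by
    by_contra hxn
    obtain ⟨f, hfY, hfx⟩ := exists_dual_annihilator Y (by rwa [hY.closure_eq])
    have h1 : R f = 0 := by
      ext y
      exact hfY y y.2
    have : f x = ξ (R f) := by
      have := congrArg (fun g : StrongDual ℝ (StrongDual ℝ X) => g f) hx
      simpa [ξ', dual_def] using this
    rw [h1] at this
    simp at this
    exact hfx this
  refine ⟨⟨x, hxY⟩, ?_⟩
  ext g
  obtain ⟨F, hF, -⟩ := exists_extension_norm_eq Y g
  have hRF : R F = g := by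
    ext y
    exact hF y
  have h1 : (inclusionInDoubleDual ℝ Y ⟨x, hxY⟩) g = g ⟨x, hxY⟩ := dual_def ℝ Y _ _
  have h2 : ξ g = ξ (R F) := by rw [hRF]
  have h3 : ξ (R F) = ξ' F := rfl
  have h4 : ξ' F = F x := by
    have := congrArg (fun g : StrongDual ℝ (StrongDual ℝ X) => g F) hx
    simpa [dual_def] using this.symm
  rw [h1, h2, h3, h4, ← hF ⟨x, hxY⟩]

set_option maxHeartbeats 1000000 in
lemma weak_seq_compact [CompleteSpace X] (hrefl : Function.Surjective (inclusionInDoubleDual ℝ X))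
    (a : ℕ → X) {M : ℝ} (hM : ∀ k, ‖a k‖ ≤ M) :
    ∃ x : X, x ∈ closure (convexHull ℝ (Set.range a)) ∧ ∃ ψ : ℕ → ℕ, StrictMono ψ ∧
      ∀ f : X →L[ℝ] ℝ, Tendsto (fun k => f (a (ψ k))) atTop (𝓝 (f x)) := by
  classical
  set Y : Submodule ℝ X := (Submodule.span ℝ (Set.range a)).topologicalClosure with hYdef
  have hYclosed : IsClosed (Y : Set X) := Submodule.isClosed_topologicalClosure _
  haveI : CompleteSpace Y := hYclosed.completeSpace_coe
  have hYsep : IsSeparable (Y : Set X) := by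
    have h1 : IsSeparable (Submodule.span ℝ (Set.range a) : Set X) :=
      (countable_range a).isSeparable.span
    have := h1.closure
    rwa [← Submodule.topologicalClosure_coe] at this
  haveI : SeparableSpace Y := hYsep.separableSpace
  have hYrefl : Function.Surjective (inclusionInDoubleDual ℝ Y) :=
    subspace_reflexive hrefl Y hYclosed
  haveI : SeparableSpace (StrongDual ℝ (StrongDual ℝ Y)) := by
    have hd : DenseRange (inclusionInDoubleDual ℝ Y) := hYrefl.denseRange
    exact hd.separableSpace (inclusionInDoubleDual ℝ Y).continuous
  haveI : SeparableSpace (StrongDual ℝ Y) := separableSpace_of_dual_separable (E := StrongDual ℝ Y)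
  set g : ℕ → StrongDual ℝ Y := denseSeq (StrongDual ℝ Y) with hg
  have hgd : DenseRange g := denseRange_denseSeq _
  have haY : ∀ k, a k ∈ Y :=
    fun k => Submodule.le_topologicalClosure _ (Submodule.subset_span (mem_range_self k))
  set c : ℕ → Y := fun k => ⟨a k, haY k⟩ with hc
  set M' : ℝ := max M 0 with hM'
  have hM'0 : 0 ≤ M' := le_max_right _ _
  have hcM : ∀ k, ‖c k‖ ≤ M' := fun k => le_trans (hM k) (le_max_left _ _)
  -- diagonal extraction via compactness of a product of intervals
  set T : Set (ℕ → ℝ) := univ.pi fun n => Icc (-(‖g n‖ * M')) (‖g n‖ * M') with hT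
  have hTc : IsCompact T := isCompact_univ_pi fun n => isCompact_Icc
  have hFT : ∀ k, (fun n => g n (c k)) ∈ T := by
    intro k n _
    have h1 : |g n (c k)| ≤ ‖g n‖ * M' := by
      calc |g n (c k)| ≤ ‖g n‖ * ‖c k‖ := (g n).le_opNorm (c k)
        _ ≤ ‖g n‖ * M' := mul_le_mul_of_nonneg_left (hcM k) (norm_nonneg (g n))
    exact abs_le.mp h1
  obtain ⟨z, -, ψ, hψ, hz⟩ := hTc.isSeqCompact hFT
  have hgl : ∀ n, Tendsto (fun k => g n (c (ψ k))) atTop (𝓝 (z n)) := by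
    intro n
    have := tendsto_pi_nhds.mp hz n
    simpa [Function.comp] using this
  -- every functional converges along the subsequence
  have hcauchy : ∀ h : StrongDual ℝ Y, ∃ l : ℝ, Tendsto (fun k => h (c (ψ k))) atTop (𝓝 l) := by
    intro h
    have : CauchySeq (fun k => h (c (ψ k))) := by
      rw [Metric.cauchySeq_iff]
      intro ε hε
      have hε3 : 0 < ε / 3 / (M' + 1) := by positivity
      obtain ⟨n, hgn⟩ := hgd.exists_dist_lt h hε3
      have hck : ∀ k, |h (c (ψ k)) - g n (c (ψ k))| ≤ ε / 3 := by
        intro k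
        have h1 : |(h - g n) (c (ψ k))| ≤ ‖h - g n‖ * ‖c (ψ k)‖ := (h - g n).le_opNorm _
        have h2 : ‖h - g n‖ * ‖c (ψ k)‖ ≤ ‖h - g n‖ * M' :=
          mul_le_mul_of_nonneg_left (hcM _) (norm_nonneg (h - g n))
        have h3 : ‖h - g n‖ ≤ ε / 3 / (M' + 1) := by
          exact (le_of_eq (dist_eq_norm h (g n)).symm).trans hgn.le
        have h4 : ‖h - g n‖ * M' ≤ ε / 3 := by
          have : ‖h - g n‖ * M' ≤ (ε / 3 / (M' + 1)) * M' :=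
            mul_le_mul_of_nonneg_right h3 hM'0
          have h5 : (ε / 3 / (M' + 1)) * M' ≤ ε / 3 := by
            rw [div_mul_eq_mul_div, div_le_iff₀ (by linarith)]
            nlinarith
          linarith
        simp only [ContinuousLinearMap.sub_apply] at h1
        linarith
      have hconv := (hgl n).cauchySeq
      rw [Metric.cauchySeq_iff] at hconv
      obtain ⟨N, hN⟩ := hconv (ε / 3) (by linarith)
      refine ⟨N, fun m hm k hk => ?_⟩
      have := hN m hm k hk
      rw [Real.dist_eq] at this ⊢
      have h1 := hck m
      have h2 := hck k
      have : |h (c (ψ m)) - h (c (ψ k))| ≤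
          |h (c (ψ m)) - g n (c (ψ m))| + |g n (c (ψ m)) - g n (c (ψ k))| +
          |g n (c (ψ k)) - h (c (ψ k))| := by
        have := abs_sub_abs_le_abs_sub (h (c (ψ m))) (h (c (ψ k)))
        rw [show h (c (ψ m)) - h (c (ψ k)) =
          (h (c (ψ m)) - g n (c (ψ m))) + (g n (c (ψ m)) - g n (c (ψ k))) +
          (g n (c (ψ k)) - h (c (ψ k))) by ring]
        exact (abs_add_three _ _ _)
      rw [abs_sub_comm (g n (c (ψ k)))] at this
      linarith [hN m hm k hk, hck m, hck k,
        (Real.dist_eq (g n (c (ψ m))) (g n (c (ψ k)))) ▸ hN m hm k hk]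
    exact cauchySeq_tendsto_of_complete this
  choose Λ hΛ using hcauchy
  -- Λ is a continuous linear functional on the dual of Y
  have hΛadd : ∀ h1 h2 : StrongDual ℝ Y, Λ (h1 + h2) = Λ h1 + Λ h2 := by
    intro h1 h2
    refine tendsto_nhds_unique (hΛ (h1 + h2)) ?_
    simpa using (hΛ h1).add (hΛ h2)
  have hΛsmul : ∀ (r : ℝ) (h : StrongDual ℝ Y), Λ (r • h) = r * Λ h := by
    intro r h
    refine tendsto_nhds_unique (hΛ (r • h)) ?_
    simpa using (hΛ h).const_mul r
  have hΛbd : ∀ h : StrongDual ℝ Y, |Λ h| ≤ M' * ‖h‖ := by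
    intro h
    have h1 : Tendsto (fun k => |h (c (ψ k))|) atTop (𝓝 |Λ h|) := (hΛ h).abs
    refine le_of_tendsto h1 (Eventually.of_forall fun k => ?_)
    calc |h (c (ψ k))| ≤ ‖h‖ * ‖c (ψ k)‖ := h.le_opNorm _
      _ ≤ ‖h‖ * M' := mul_le_mul_of_nonneg_left (hcM _) (norm_nonneg h)
      _ = M' * ‖h‖ := mul_comm _ _
  let Λlin : StrongDual ℝ Y →ₗ[ℝ] ℝ :=
    { toFun := Λ, map_add' := hΛadd, map_smul' := hΛsmul }
  let Λclm : StrongDual ℝ (StrongDual ℝ Y) :=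
    LinearMap.mkContinuous Λlin M' (fun (h : StrongDual ℝ Y) => by exact (Real.norm_eq_abs _).trans_le (hΛbd h))
  obtain ⟨y, hy⟩ := hYrefl Λclm
  have hytd : ∀ h : StrongDual ℝ Y, h y = Λ h := by
    intro h
    have := congrArg (fun F : StrongDual ℝ (StrongDual ℝ Y) => F h) hy
    exact (by simpa [dual_def] using this : h y = Λclm h)
  have hweak : ∀ f : X →L[ℝ] ℝ, Tendsto (fun k => f (a (ψ k))) atTop (𝓝 (f (y : X))) := by
    intro f
    let h : StrongDual ℝ Y := f.comp Y.subtypeL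
    have h1 : ∀ k, h (c k) = f (a k) := fun k => rfl
    have h2 : h y = f (y : X) := rfl
    have := hΛ h
    rw [← hytd h] at this
    simpa [h1, h2] using this
  refine ⟨(y : X), ?_, ψ, hψ, hweak⟩
  -- Mazur: the weak limit lies in the closed convex hull
  by_contra hnot
  obtain ⟨f, u, hfu, hux⟩ := geometric_hahn_banach_closed_point
    (convex_convexHull ℝ (Set.range a)).closure isClosed_closure hnot
  have hmem : ∀ k, a (ψ k) ∈ closure (convexHull ℝ (Set.range a)) :=
    fun k => subset_closure (subset_convexHull ℝ _ (mem_range_self _))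
  have hle : f (y : X) ≤ u := le_of_tendsto (hweak f)
    (Eventually.of_forall fun k => (hfu _ (hmem k)).le)
  linarith

end Aux2

lemma ereal_ne_cases {x : EReal} (hb : x ≠ ⊥) (ht : x ≠ ⊤) : ∃ l : ℝ, x = (l : EReal) := by
  induction x with
  | bot => exact absurd rfl hb
  | coe l => exact ⟨l, rfl⟩
  | top => exact absurd rfl ht




set_option maxHeartbeats 1000000 in
/-- In a reflexive Banach space, a pair of weakly sequentially lower semicontinuous
functions is quasiuniformly lower semicontinuous on any convex bounded set. -/
theorem stmt14 {X : Type*} [NormedAddCommGroup X] [NormedSpace ℝ X] [CompleteSpace X]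
    (hrefl : Function.Surjective (NormedSpace.inclusionInDoubleDual ℝ X))
    (φ1 φ2 : X → EReal) (hbot1 : ∀ x, φ1 x ≠ ⊥) (hbot2 : ∀ x, φ2 x ≠ ⊥)
    (U : Set X) (hconv : Convex ℝ U) (hbd : Bornology.IsBounded U)
    (hne : ∃ x ∈ U, φ1 x < ⊤ ∧ φ2 x < ⊤)
    (hwlsc1 : ∀ x ∈ U, ∀ xk : ℕ → X, (∀ k, xk k ∈ U) →
      (∀ f : X →L[ℝ] ℝ, Filter.Tendsto (fun k => f (xk k)) Filter.atTop (nhds (f x))) →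
      φ1 x ≤ Filter.liminf (fun k => φ1 (xk k)) Filter.atTop)
    (hwlsc2 : ∀ x ∈ U, ∀ xk : ℕ → X, (∀ k, xk k ∈ U) →
      (∀ f : X →L[ℝ] ℝ, Filter.Tendsto (fun k => f (xk k)) Filter.atTop (nhds (f x))) →
      φ2 x ≤ Filter.liminf (fun k => φ2 (xk k)) Filter.atTop) :
    infSum φ1 φ2 U ≤ lambdaDag φ1 φ2 U := by
  classical
  refine le_iInf ?_
  rintro ⟨V, ρ, hρ, hball⟩
  set L := lambdaCirc φ1 φ2 V with hLdef
  show infSum φ1 φ2 U ≤ L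
  rcases eq_or_ne L ⊤ with hT | hT
  · rw [hT]; exact le_top
  have hVU : V ⊆ U := fun v hv => hball v hv (mem_ball_self hρ)
  -- the target sequence of bounds
  set t : ℕ → EReal := fun k =>
    if L = ⊥ then ((-(k : ℝ) - 1 : ℝ) : EReal) else L + (((k : ℝ) + 1)⁻¹ : ℝ) with htdef
  have ht_anti : ∀ {m n : ℕ}, m ≤ n → t n ≤ t m := by
    intro m n hmn
    by_cases hB : L = ⊥
    · simp only [htdef, if_pos hB]
      refine EReal.coe_le_coe_iff.2 ?_
      have : (m : ℝ) ≤ (n : ℝ) := by exact_mod_cast hmn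
      linarith
    · simp only [htdef, if_neg hB]
      refine add_le_add_right (EReal.coe_le_coe_iff.2 ?_) L
      have h1 : (m : ℝ) + 1 ≤ (n : ℝ) + 1 := by
        have : (m : ℝ) ≤ (n : ℝ) := by exact_mod_cast hmn
        linarith
      exact inv_anti₀ (by positivity) h1
  have ht_tendsto : Tendsto t atTop (𝓝 L) := by
    by_cases hB : L = ⊥
    · have htt : t = fun k : ℕ => ((-(k : ℝ) - 1 : ℝ) : EReal) := by
        funext k; simp only [htdef, if_pos hB]
      rw [hB, htt, EReal.tendsto_nhds_bot_iff_real]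
      intro r
      filter_upwards [tendsto_natCast_atTop_atTop.eventually_gt_atTop (-r - 1)] with k hk
      exact EReal.coe_lt_coe_iff.2 (by linarith)
    · obtain ⟨l, hl⟩ := ereal_ne_cases hB hT
      have htt : t = fun k : ℕ => ((l + ((k : ℝ) + 1)⁻¹ : ℝ) : EReal) := by
        funext k; simp only [htdef]; rw [if_neg hB, hl, ← EReal.coe_add]
      have h1 : Tendsto (fun k : ℕ => (l + ((k : ℝ) + 1)⁻¹ : ℝ)) atTop (𝓝 l) := by
        have h2 : Tendsto (fun k : ℕ => ((k : ℝ) + 1)⁻¹) atTop (𝓝 0) :=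
          tendsto_inv_atTop_zero.comp (tendsto_atTop_add_const_right _ 1 tendsto_natCast_atTop_atTop)
        simpa using tendsto_const_nhds.add h2
      rw [htt, hl]
      exact (EReal.tendsto_coe (a := l)).2 h1
  -- extract approximate minimizing pairs
  have key : ∀ k : ℕ, ∃ x1 x2 : X, x1 ∈ V ∧ x2 ∈ V ∧ dist x1 x2 < ((k : ℝ) + 1)⁻¹ ∧
      φ1 x1 + φ2 x2 < t k := by
    intro k
    have hIle : sInf {v : EReal | ∃ x1 ∈ V, ∃ x2 ∈ V, dist x1 x2 < ((k : ℝ) + 1)⁻¹ ∧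
        v = φ1 x1 + φ2 x2} ≤ L := by
      rw [hLdef, lambdaCirc]
      exact le_iSup (fun η : {η : ℝ // 0 < η} =>
        sInf {v : EReal | ∃ x1 ∈ V, ∃ x2 ∈ V, dist x1 x2 < η.1 ∧ v = φ1 x1 + φ2 x2})
        ⟨((k : ℝ) + 1)⁻¹, by positivity⟩
    have hlt : sInf {v : EReal | ∃ x1 ∈ V, ∃ x2 ∈ V, dist x1 x2 < ((k : ℝ) + 1)⁻¹ ∧
        v = φ1 x1 + φ2 x2} < t k := by
      refine lt_of_le_of_lt hIle ?_
      by_cases hB : L = ⊥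
      · rw [hB]; simp only [htdef, if_pos hB]; exact EReal.bot_lt_coe _
      · obtain ⟨l, hl⟩ := ereal_ne_cases hB hT
        have : t k = ((l + ((k : ℝ) + 1)⁻¹ : ℝ) : EReal) := by
          simp only [htdef]; rw [if_neg hB, hl, ← EReal.coe_add]
        rw [this, hl]
        refine EReal.coe_lt_coe_iff.2 ?_
        have : (0 : ℝ) < ((k : ℝ) + 1)⁻¹ := by positivity
        linarith
    obtain ⟨v, hv, hvlt⟩ := sInf_lt_iff.mp hlt
    obtain ⟨x1, hx1, x2, hx2, hd, rfl⟩ := hv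
    exact ⟨x1, x2, hx1, hx2, hd, hvlt⟩
  choose x1 x2 hx1V hx2V hdist hval using key
  -- weak compactness
  obtain ⟨C, hC⟩ := hbd.exists_norm_le
  obtain ⟨x, hxcl, ψ, hψ, hweak⟩ := weak_seq_compact hrefl x1
    (M := C) (fun k => hC _ (hVU (hx1V k)))
  -- x ∈ U
  have hxU : x ∈ U := by
    set W : Set X := {z | Metric.ball z ρ ⊆ U} with hW
    have hWconv : Convex ℝ W := by
      intro z1 hz1 z2 hz2 a b ha hb hab
      intro w hw
      rw [mem_ball, dist_eq_norm] at hw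
      set h := w - (a • z1 + b • z2) with hh
      have hw' : w = a • (z1 + h) + b • (z2 + h) := by
        have he : a • (z1 + h) + b • (z2 + h) = (a • z1 + b • z2) + (a + b) • h := by
          rw [smul_add, smul_add, add_smul]; abel
        rw [he, hab, one_smul, hh]; abel
      rw [hw']
      refine hconv (hz1 ?_) (hz2 ?_) ha hb hab
      · rw [mem_ball, dist_eq_norm]; simpa using hw
      · rw [mem_ball, dist_eq_norm]; simpa using hw
    have hrange : Set.range x1 ⊆ W := by
      rintro _ ⟨k, rfl⟩
      exact hball _ (hx1V k)
    have hhull : convexHull ℝ (Set.range x1) ⊆ W := convexHull_min hrange hWconv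
    obtain ⟨w, hwmem, hwd⟩ := Metric.mem_closure_iff.mp hxcl ρ hρ
    exact hhull hwmem (by rwa [mem_ball])
  -- weak convergence of the second sequence
  have hweak2 : ∀ f : X →L[ℝ] ℝ, Tendsto (fun k => f (x2 (ψ k))) atTop (𝓝 (f x)) := by
    intro f
    have hdiff : Tendsto (fun k => f (x2 (ψ k)) - f (x1 (ψ k))) atTop (𝓝 0) := by
      have hbound : ∀ k, ‖f (x2 (ψ k)) - f (x1 (ψ k))‖ ≤ ‖f‖ * ((k : ℝ) + 1)⁻¹ := by
        intro k
        have h1 : ‖f (x2 (ψ k)) - f (x1 (ψ k))‖ ≤ ‖f‖ * ‖x2 (ψ k) - x1 (ψ k)‖ := by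
          rw [← map_sub]; exact f.le_opNorm _
        have h2 : ‖x2 (ψ k) - x1 (ψ k)‖ ≤ ((ψ k : ℝ) + 1)⁻¹ := by
          rw [← dist_eq_norm, dist_comm]
          exact (hdist (ψ k)).le
        have h3 : ((ψ k : ℝ) + 1)⁻¹ ≤ ((k : ℝ) + 1)⁻¹ := by
          refine inv_anti₀ (by positivity) ?_
          have : (k : ℝ) ≤ (ψ k : ℝ) := by exact_mod_cast hψ.le_apply (x := k)
          linarith
        calc ‖f (x2 (ψ k)) - f (x1 (ψ k))‖ ≤ ‖f‖ * ‖x2 (ψ k) - x1 (ψ k)‖ := h1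
          _ ≤ ‖f‖ * ((k : ℝ) + 1)⁻¹ := by
            refine mul_le_mul_of_nonneg_left (le_trans h2 h3) (norm_nonneg _)
      have h2 : Tendsto (fun k : ℕ => ((k : ℝ) + 1)⁻¹) atTop (𝓝 0) :=
        tendsto_inv_atTop_zero.comp (tendsto_atTop_add_const_right _ 1 tendsto_natCast_atTop_atTop)
      exact squeeze_zero_norm hbound (by simpa using h2.const_mul ‖f‖)
    have := (hweak f).add hdiff
    simp only [add_zero] at this
    refine this.congr fun k => by ring
  -- lower semicontinuity
  have h1 : φ1 x ≤ liminf (fun k => φ1 (x1 (ψ k))) atTop :=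
    hwlsc1 x hxU (fun k => x1 (ψ k)) (fun k => hVU (hx1V (ψ k))) hweak
  have h2 : φ2 x ≤ liminf (fun k => φ2 (x2 (ψ k))) atTop :=
    hwlsc2 x hxU (fun k => x2 (ψ k)) (fun k => hVU (hx2V (ψ k))) hweak2
  have h3 : φ1 x + φ2 x ≤ liminf (fun k => φ1 (x1 (ψ k)) + φ2 (x2 (ψ k))) atTop := by
    refine le_trans (add_le_add h1 h2) ?_
    exact EReal.le_liminf_add
  have h4 : liminf (fun k => φ1 (x1 (ψ k)) + φ2 (x2 (ψ k))) atTop ≤ L := by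
    have h5 : liminf (fun k => φ1 (x1 (ψ k)) + φ2 (x2 (ψ k))) atTop ≤ liminf t atTop := by
      refine liminf_le_liminf (Eventually.of_forall fun k => ?_)
      exact le_trans (hval (ψ k)).le (ht_anti hψ.le_apply)
    rwa [ht_tendsto.liminf_eq] at h5
  calc infSum φ1 φ2 U ≤ φ1 x + φ2 x := sInf_le ⟨x, hxU, rfl⟩
    _ ≤ L := le_trans h3 h4
end
end

section
/- Let Ω1, Ω2 ⊂ X and x̄ ∈ Ω1 ∩ Ω2. The pair of indicator functions (i_{Ω1}, i_{Ω2}) is firmly quasiuniformly lower semicontinuous near x̄ if and only if there exists δ > 0 such that for every ε > 0 there exists η > 0 with: for all x ∈ B_δ(x̄), if dist(x,Ω1) < η and dist(x,Ω2) < η then dist(x, Ω1 ∩ Ω2) < ε (i.e. limsup_{x∈B_δ(x̄), dist(x,Ω1)→0, dist(x,Ω2)→0} dist(x, Ω1∩Ω2) = 0). -/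
open Metric Set Filter

noncomputable section

lemma indFn_of_mem {X : Type*} {Ω : Set X} {x : X} (h : x ∈ Ω) : indFn Ω x = 0 := by
  simp [indFn, h]

lemma indFn_of_not_mem {X : Type*} {Ω : Set X} {x : X} (h : x ∉ Ω) : indFn Ω x = ⊤ := by
  simp [indFn, h]

lemma indFn_ne_bot {X : Type*} (Ω : Set X) (x : X) : indFn Ω x ≠ ⊥ := by
  by_cases h : x ∈ Ω
  · rw [indFn_of_mem h]; simp
  · rw [indFn_of_not_mem h]; simp

lemma indFn_lt_top {X : Type*} {Ω : Set X} {x : X} : indFn Ω x < ⊤ ↔ x ∈ Ω := by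
  by_cases h : x ∈ Ω
  · rw [indFn_of_mem h]; simp [h]
  · rw [indFn_of_not_mem h]; simp [h]

lemma ereal_le_zero (a : EReal) (h : ∀ ε : ℝ, 0 < ε → a ≤ (ε : EReal)) : a ≤ 0 := by
  by_contra hc
  push_neg at hc
  obtain ⟨ε, h0, hε⟩ := EReal.exists_between_coe_real hc
  have h0' : (0 : ℝ) < ε := by exact_mod_cast h0
  exact absurd (lt_of_lt_of_le hε (h ε h0')) (lt_irrefl _)

/-- Upper bound on the `♦`-value from a point of the intersection. -/
lemma diamond_le_of_mem {X : Type*} [MetricSpace X] {Ω1 Ω2 W : Set X} {x1 x2 x : X}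
    (hx1 : x1 ∈ Ω1) (hx2 : x2 ∈ Ω2) (hxW : x ∈ W) (h1 : x ∈ Ω1) (h2 : x ∈ Ω2) :
    diamond (indFn Ω1) (indFn Ω2) W x1 x2 ≤
      max ((dist x x1 : ℝ) : EReal) ((dist x x2 : ℝ) : EReal) := by
  have hmem : max (max ((dist x x1 : ℝ) : EReal) ((dist x x2 : ℝ) : EReal)) (0 : EReal) ∈
      {v : EReal | ∃ y ∈ W,
        v = max (max ((dist y x1 : ℝ) : EReal) ((dist y x2 : ℝ) : EReal))
            (indFn Ω1 y + indFn Ω2 y - indFn Ω1 x1 - indFn Ω2 x2)} := by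
    refine ⟨x, hxW, ?_⟩
    simp [indFn_of_mem h1, indFn_of_mem h2, indFn_of_mem hx1, indFn_of_mem hx2]
  unfold diamond
  exact le_trans (sInf_le hmem)
    (max_le le_rfl (le_max_of_le_left (by exact_mod_cast dist_nonneg)))

/-- From a small `♦`-value, extract a nearby point of the intersection inside `W`. -/
lemma diamond_lt_extract {X : Type*} [MetricSpace X] {Ω1 Ω2 W : Set X} {x1 x2 : X} {ε : ℝ}
    (hx1 : x1 ∈ Ω1) (hx2 : x2 ∈ Ω2)
    (h : diamond (indFn Ω1) (indFn Ω2) W x1 x2 < (ε : EReal)) :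
    ∃ x ∈ W, x ∈ Ω1 ∩ Ω2 ∧ dist x x1 < ε ∧ dist x x2 < ε := by
  unfold diamond at h
  rw [sInf_lt_iff] at h
  obtain ⟨v, ⟨x, hxW, rfl⟩, hv⟩ := h
  rw [indFn_of_mem hx1, indFn_of_mem hx2] at hv
  have hterm : indFn Ω1 x + indFn Ω2 x - 0 - 0 < (ε : EReal) :=
    lt_of_le_of_lt (le_max_right _ _) hv
  have h1 : x ∈ Ω1 := by
    by_contra hc
    rw [indFn_of_not_mem hc, EReal.top_add_of_ne_bot (indFn_ne_bot Ω2 x)] at hterm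
    simp at hterm
  have h2 : x ∈ Ω2 := by
    by_contra hc
    rw [indFn_of_not_mem hc, indFn_of_mem h1] at hterm
    simp at hterm
  have hd1 : ((dist x x1 : ℝ) : EReal) < (ε : EReal) :=
    lt_of_le_of_lt (le_trans (le_max_left _ _) (le_max_left _ _)) hv
  have hd2 : ((dist x x2 : ℝ) : EReal) < (ε : EReal) :=
    lt_of_le_of_lt (le_trans (le_max_right _ _) (le_max_left _ _)) hv
  exact ⟨x, hxW, ⟨h1, h2⟩, by exact_mod_cast hd1, by exact_mod_cast hd2⟩

/-- Sufficient condition for `Θ† = 0` for a pair of indicator functions. -/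
lemma thetaDag_eq_zero {X : Type*} [MetricSpace X] {Ω1 Ω2 U : Set X}
    (h : ∀ V : Set X, EssInt U V → ∀ ε : ℝ, 0 < ε → ∃ η : ℝ, 0 < η ∧
      ∀ x1 x2 : X, x1 ∈ Ω1 → x1 ∈ V → x2 ∈ Ω2 → x2 ∈ V → dist x1 x2 < η →
        diamond (indFn Ω1) (indFn Ω2) U x1 x2 ≤ (ε : EReal)) :
    thetaDag (indFn Ω1) (indFn Ω2) U = 0 := by
  unfold thetaDag thetaDagW
  apply le_antisymm
  · apply iSup_le
    rintro ⟨V, hV⟩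
    apply ereal_le_zero
    intro ε hε
    obtain ⟨η, hη, hP⟩ := h V hV ε hε
    refine le_trans (iInf_le _ ⟨η, hη⟩) ?_
    apply sSup_le
    rintro v (rfl | ⟨x1, x2, h1, hx1V, h2, hx2V, hd, rfl⟩)
    · exact_mod_cast hε.le
    · exact hP x1 x2 (indFn_lt_top.mp h1) hx1V (indFn_lt_top.mp h2) hx2V hd
  · refine le_trans ?_ (le_iSup _ ⟨∅, 1, one_pos, by simp⟩)
    exact le_iInf fun η => le_sSup (mem_insert _ _)

/-- Extraction from `Θ† = 0` for a pair of indicator functions. -/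
lemma thetaDag_extract {X : Type*} [MetricSpace X] {Ω1 Ω2 U : Set X}
    (h0 : thetaDag (indFn Ω1) (indFn Ω2) U = 0) (V : Set X) (hV : EssInt U V)
    (ε : ℝ) (hε : 0 < ε) : ∃ η : ℝ, 0 < η ∧
      ∀ x1 x2 : X, x1 ∈ Ω1 → x1 ∈ V → x2 ∈ Ω2 → x2 ∈ V → dist x1 x2 < η →
        diamond (indFn Ω1) (indFn Ω2) U x1 x2 < (ε : EReal) := by
  have h1 : (⨅ η : {η : ℝ // 0 < η},
      sSup (insert (0 : EReal)
        {v : EReal | ∃ x1 x2 : X, indFn Ω1 x1 < ⊤ ∧ x1 ∈ V ∧ indFn Ω2 x2 < ⊤ ∧ x2 ∈ V ∧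
          dist x1 x2 < η.1 ∧ v = diamond (indFn Ω1) (indFn Ω2) U x1 x2})) < (ε : EReal) := by
    calc (⨅ η : {η : ℝ // 0 < η},
        sSup (insert (0 : EReal)
          {v : EReal | ∃ x1 x2 : X, indFn Ω1 x1 < ⊤ ∧ x1 ∈ V ∧ indFn Ω2 x2 < ⊤ ∧ x2 ∈ V ∧
            dist x1 x2 < η.1 ∧ v = diamond (indFn Ω1) (indFn Ω2) U x1 x2}))
        ≤ thetaDagW (indFn Ω1) (indFn Ω2) U U := by
          unfold thetaDagW
          exact le_iSup (fun W : {V : Set X // EssInt U V} =>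
            ⨅ η : {η : ℝ // 0 < η}, sSup (insert (0 : EReal)
              {v : EReal | ∃ x1 x2 : X, indFn Ω1 x1 < ⊤ ∧ x1 ∈ W.1 ∧ indFn Ω2 x2 < ⊤ ∧
                x2 ∈ W.1 ∧ dist x1 x2 < η.1 ∧ v = diamond (indFn Ω1) (indFn Ω2) U x1 x2}))
            ⟨V, hV⟩
      _ = 0 := h0
      _ < (ε : EReal) := by exact_mod_cast hε
  rw [iInf_lt_iff] at h1
  obtain ⟨⟨η, hη⟩, hlt⟩ := h1
  refine ⟨η, hη, fun x1 x2 h1' hv1 h2' hv2 hd => lt_of_le_of_lt (le_sSup ?_) hlt⟩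
  exact mem_insert_iff.mpr (Or.inr ⟨x1, x2, indFn_lt_top.mpr h1', hv1,
    indFn_lt_top.mpr h2', hv2, hd, rfl⟩)

/-- Characterization of firm quasiuniform lower semicontinuity of a pair of indicator
functions near a point of the intersection. -/
theorem stmt15 {X : Type*} [MetricSpace X] (Ω1 Ω2 : Set X) (x₀ : X)
    (hx₀ : x₀ ∈ Ω1 ∩ Ω2) :
    (∃ δ0 : ℝ, 0 < δ0 ∧ ∀ δ : ℝ, 0 < δ → δ ≤ δ0 →
        thetaDag (indFn Ω1) (indFn Ω2) (Metric.closedBall x₀ δ) = 0) ↔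
      ∃ δ : ℝ, 0 < δ ∧ ∀ ε : ℝ, 0 < ε → ∃ η : ℝ, 0 < η ∧
        ∀ x ∈ Metric.ball x₀ δ, Metric.infDist x Ω1 < η → Metric.infDist x Ω2 < η →
          Metric.infDist x (Ω1 ∩ Ω2) < ε := by
  constructor
  · -- forward direction
    rintro ⟨δ0, hδ0, H⟩
    refine ⟨δ0 / 4, by linarith, fun ε hε => ?_⟩
    set ε' : ℝ := min ε δ0 / 3 with hε'def
    have hε' : 0 < ε' := by
      have := lt_min hε hδ0
      positivity
    have hε'le : ε' ≤ ε / 3 := by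
      have : min ε δ0 ≤ ε := min_le_left _ _
      linarith
    -- V = closed ball of radius δ0/2 is essentially interior in the closed ball of radius δ0
    have hV : EssInt (Metric.closedBall x₀ δ0) (Metric.closedBall x₀ (δ0 / 2)) := by
      refine ⟨δ0 / 2, by linarith, fun v hv y hy => ?_⟩
      rw [Metric.mem_closedBall] at hv ⊢
      rw [Metric.mem_ball] at hy
      calc dist y x₀ ≤ dist y v + dist v x₀ := dist_triangle _ _ _
        _ ≤ δ0 := by linarith
    obtain ⟨η', hη', hP⟩ := thetaDag_extract (H δ0 hδ0 le_rfl) _ hV ε' hε'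
    refine ⟨min (η' / 2) (min (δ0 / 4) ε'), by positivity, fun x hx h1 h2 => ?_⟩
    have hηle1 : min (η' / 2) (min (δ0 / 4) ε') ≤ η' / 2 := min_le_left _ _
    have hηle2 : min (η' / 2) (min (δ0 / 4) ε') ≤ δ0 / 4 :=
      le_trans (min_le_right _ _) (min_le_left _ _)
    have hηle3 : min (η' / 2) (min (δ0 / 4) ε') ≤ ε' :=
      le_trans (min_le_right _ _) (min_le_right _ _)
    obtain ⟨x1, hx1Ω, hdx1⟩ := (Metric.infDist_lt_iff ⟨x₀, hx₀.1⟩).mp h1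
    obtain ⟨x2, hx2Ω, hdx2⟩ := (Metric.infDist_lt_iff ⟨x₀, hx₀.2⟩).mp h2
    rw [Metric.mem_ball] at hx
    have hx1V : x1 ∈ Metric.closedBall x₀ (δ0 / 2) := by
      rw [Metric.mem_closedBall]
      calc dist x1 x₀ ≤ dist x1 x + dist x x₀ := dist_triangle _ _ _
        _ ≤ δ0 / 2 := by rw [dist_comm x1 x]; linarith
    have hx2V : x2 ∈ Metric.closedBall x₀ (δ0 / 2) := by
      rw [Metric.mem_closedBall]
      calc dist x2 x₀ ≤ dist x2 x + dist x x₀ := dist_triangle _ _ _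
        _ ≤ δ0 / 2 := by rw [dist_comm x2 x]; linarith
    have hd12 : dist x1 x2 < η' := by
      calc dist x1 x2 ≤ dist x1 x + dist x x2 := dist_triangle _ _ _
        _ < η' := by rw [dist_comm x1 x]; linarith
    have hdia := hP x1 x2 hx1Ω hx1V hx2Ω hx2V hd12
    obtain ⟨x', _, hx'Ω, hd1', _⟩ := diamond_lt_extract hx1Ω hx2Ω hdia
    have : Metric.infDist x (Ω1 ∩ Ω2) ≤ dist x x' := Metric.infDist_le_dist_of_mem hx'Ω
    calc Metric.infDist x (Ω1 ∩ Ω2) ≤ dist x x' := this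
      _ ≤ dist x x1 + dist x1 x' := dist_triangle _ _ _
      _ < ε := by rw [dist_comm x1 x']; linarith
  · -- backward direction
    rintro ⟨δ, hδ, H⟩
    refine ⟨δ / 2, by linarith, fun δ' hδ' hδ'le => ?_⟩
    apply thetaDag_eq_zero
    rintro V ⟨ρ, hρ, hVρ⟩ ε hε
    set ε' : ℝ := min (ε / 2) (ρ / 2) with hε'def
    have hε'pos : 0 < ε' := by positivity
    obtain ⟨η0, hη0, hH⟩ := H ε' hε'pos
    refine ⟨min η0 ε', by positivity, fun x1 x2 hx1Ω hx1V hx2Ω hx2V hd => ?_⟩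
    have hx1U : x1 ∈ Metric.closedBall x₀ δ' := hVρ x1 hx1V (Metric.mem_ball_self hρ)
    have hx1b : x1 ∈ Metric.ball x₀ δ := by
      rw [Metric.mem_ball]
      rw [Metric.mem_closedBall] at hx1U
      linarith
    have hi1 : Metric.infDist x1 Ω1 < min η0 ε' := by
      have := Metric.infDist_le_dist_of_mem hx1Ω (x := x1)
      simp only [dist_self] at this
      linarith [lt_min hη0 hε'pos]
    have hi2 : Metric.infDist x1 Ω2 < min η0 ε' :=
      lt_of_le_of_lt (Metric.infDist_le_dist_of_mem hx2Ω) hd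
    have hi1' : Metric.infDist x1 Ω1 < η0 := lt_of_lt_of_le hi1 (min_le_left _ _)
    have hi2' : Metric.infDist x1 Ω2 < η0 := lt_of_lt_of_le hi2 (min_le_left _ _)
    have hint := hH x1 hx1b hi1' hi2'
    obtain ⟨x', hx'Ω, hdx'⟩ := (Metric.infDist_lt_iff ⟨x₀, hx₀⟩).mp hint
    have hx'U : x' ∈ Metric.closedBall x₀ δ' := by
      apply hVρ x1 hx1V
      rw [Metric.mem_ball, dist_comm]
      calc dist x1 x' < ε' := hdx'
        _ ≤ ρ / 2 := min_le_right _ _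
        _ < ρ := by linarith
    refine le_trans (diamond_le_of_mem hx1Ω hx2Ω hx'U hx'Ω.1 hx'Ω.2) (max_le ?_ ?_)
    · have : dist x' x1 < ε := by
        rw [dist_comm]
        calc dist x1 x' < ε' := hdx'
          _ ≤ ε := le_trans (min_le_left _ _) (by linarith)
      exact_mod_cast this.le
    · have : dist x' x2 < ε := by
        have hd2 : dist x1 x2 < ε' := lt_of_lt_of_le hd (min_le_right _ _)
        calc dist x' x2 ≤ dist x' x1 + dist x1 x2 := dist_triangle _ _ _
          _ < ε' + ε' := by rw [dist_comm x' x1]; linarith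
          _ ≤ ε := by
            have : ε' ≤ ε / 2 := min_le_left _ _
            linarith
      exact_mod_cast this.le
end
end
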